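/- arXiv:2211.12818 — 3 statements merged into one kernel-verified Lean document; each statement's English description precedes it below -/
import Mathlib

section
/- Let A : (-ε₀,ε₀) × closure(B_{n-1}(0,1)) × ℝ → ℝ and suppose the map M_A taking (ε,ζ) to the function z ↦ A(ε,z,ζ) is real analytic from (-ε₀,ε₀) × ℝ to C^{0,α}(closure B_{n-1}(0,1)). Then for every open bounded interval J of ℝ and every compact subset E of (-ε₀,ε₀) there exists C > 0 such that sup_{ε∈E} ‖A(ε,·,·)‖_{C^{0,α}(closure B_{n-1}(0,1) × closure J)} ≤ C. -/
/-- `holderNormLE a s f c` : the `C^{0,α}` norm of `f` on `s` (sup norm plus `a`-Hölder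
seminorm) is at most `c`. -/
def holderNormLE {X : Type*} [PseudoMetricSpace X] (a : ℝ) (s : Set X) (f : X → ℝ)
    (c : ℝ) : Prop :=
  ∃ m h : ℝ, 0 ≤ m ∧ 0 ≤ h ∧ (∀ x ∈ s, |f x| ≤ m) ∧
    (∀ x ∈ s, ∀ y ∈ s, |f x - f y| ≤ h * dist x y ^ a) ∧ m + h ≤ c

lemma abs_hasSum_le {ι : Type*} {f g : ι → ℝ} {S c : ℝ} (hf : HasSum f S) (hg : HasSum g c)
    (hb : ∀ p, |f p| ≤ g p) : |S| ≤ c := by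
  have h1 : Summable (fun p => |f p|) :=
    Summable.of_nonneg_of_le (fun _ => abs_nonneg _) hb hg.summable
  calc |S| = |∑' p, f p| := by rw [hf.tsum_eq]
    _ ≤ ∑' p, |f p| := by
      have h2 := norm_tsum_le_tsum_norm (f := f) (by simpa only [Real.norm_eq_abs] using h1)
      simpa only [Real.norm_eq_abs] using h2
    _ ≤ ∑' p, g p := Summable.tsum_le_tsum hb h1 hg.summable
    _ = c := hg.tsum_eq

lemma sum_half : HasSum (fun p : ℕ × ℕ => ((1:ℝ)/2) ^ (p.1 + p.2)) 4 := by
  have h : HasSum (fun n : ℕ => ((1:ℝ)/2) ^ n) 2 := by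
    have := hasSum_geometric_of_lt_one (by norm_num : (0:ℝ) ≤ 1/2) (by norm_num)
    norm_num at this; exact this
  have hs : Summable (fun x : ℕ × ℕ => ((1:ℝ)/2) ^ x.1 * ((1:ℝ)/2) ^ x.2) :=
    Summable.mul_of_nonneg h.summable h.summable
      (fun n => by positivity) (fun n => by positivity)
  have hm := HasSum.mul h h hs
  have h2 : (4:ℝ) = 2 * 2 := by norm_num
  rw [h2]
  simp only [pow_add]
  exact hm

lemma sum_jhalf : HasSum (fun p : ℕ × ℕ => (p.1 : ℝ) * ((1:ℝ)/2) ^ (p.1 + p.2)) 4 := by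
  have hg : HasSum (fun n : ℕ => ((1:ℝ)/2) ^ n) 2 := by
    have := hasSum_geometric_of_lt_one (by norm_num : (0:ℝ) ≤ 1/2) (by norm_num)
    norm_num at this; exact this
  have hj : HasSum (fun n : ℕ => (n : ℝ) * ((1:ℝ)/2) ^ n) 2 := by
    have h0 := hasSum_coe_mul_geometric_of_norm_lt_one (𝕜 := ℝ) (r := (1:ℝ)/2)
      (by rw [Real.norm_eq_abs, abs_of_pos] <;> norm_num)
    have e : (1:ℝ) / 2 / (1 - 1 / 2) ^ 2 = 2 := by norm_num
    rw [e] at h0; exact h0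
  have hs : Summable (fun x : ℕ × ℕ =>
      ((x.1 : ℝ) * ((1:ℝ)/2) ^ x.1) * ((1:ℝ)/2) ^ x.2) :=
    Summable.mul_of_nonneg hj.summable hg.summable
      (fun n => by positivity) (fun n => by positivity)
  have hm := HasSum.mul hj hg hs
  have h2 : (4:ℝ) = 2 * 2 := by norm_num
  rw [h2]
  simp only [pow_add, ← mul_assoc]
  exact hm

lemma pow_sub_pow_abs_le {x y c : ℝ} (hc : 0 < c) (hx : |x| ≤ c) (hy : |y| ≤ c) (j : ℕ) :
    |x ^ j - y ^ j| ≤ (j : ℝ) * (c ^ j / c) * |x - y| := by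
  cases j with
  | zero => simp
  | succ n =>
    have hgeom := geom_sum₂_mul x y (n + 1)
    rw [← hgeom, abs_mul]
    have hsum : |∑ i ∈ Finset.range (n + 1), x ^ i * y ^ (n + 1 - 1 - i)| ≤ (n + 1 : ℝ) * c ^ n := by
      calc |∑ i ∈ Finset.range (n + 1), x ^ i * y ^ (n + 1 - 1 - i)|
          ≤ ∑ i ∈ Finset.range (n + 1), |x ^ i * y ^ (n + 1 - 1 - i)| :=
            Finset.abs_sum_le_sum_abs _ _
        _ ≤ ∑ i ∈ Finset.range (n + 1), c ^ n := by
            apply Finset.sum_le_sum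
            intro i hi
            rw [Finset.mem_range] at hi
            rw [abs_mul, abs_pow, abs_pow]
            have h1 : |x| ^ i * |y| ^ (n + 1 - 1 - i) ≤ c ^ i * c ^ (n + 1 - 1 - i) := by
              apply mul_le_mul (pow_le_pow_left₀ (abs_nonneg _) hx _)
                (pow_le_pow_left₀ (abs_nonneg _) hy _) (by positivity) (by positivity)
            calc |x| ^ i * |y| ^ (n + 1 - 1 - i) ≤ c ^ i * c ^ (n + 1 - 1 - i) := h1
              _ = c ^ n := by rw [← pow_add]; congr 1; omega
        _ = (n + 1 : ℝ) * c ^ n := by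
            rw [Finset.sum_const, Finset.card_range, nsmul_eq_mul]; push_cast; ring
    have hcn : (n + 1 : ℝ) * c ^ n = ((n + 1 : ℕ) : ℝ) * (c ^ (n + 1) / c) := by
      push_cast
      rw [pow_succ]
      field_simp
    calc |∑ i ∈ Finset.range (n + 1), x ^ i * y ^ (n + 1 - 1 - i)| * |x - y|
        ≤ ((n + 1 : ℝ) * c ^ n) * |x - y| :=
          mul_le_mul_of_nonneg_right hsum (abs_nonneg _)
      _ = ((n + 1 : ℕ) : ℝ) * (c ^ (n + 1) / c) * |x - y| := by rw [hcn]

lemma holder_sup {X : Type*} [PseudoMetricSpace X] {α : ℝ} {s : Set X} {f : X → ℝ} {c : ℝ}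
    (hc : holderNormLE α s f c) : ∀ x ∈ s, |f x| ≤ c := by
  obtain ⟨m, h, hm0, hh0, hmb, _, hmh⟩ := hc
  intro x hx
  exact (hmb x hx).trans (by linarith)

lemma holder_holder {X : Type*} [PseudoMetricSpace X] {α : ℝ} {s : Set X} {f : X → ℝ} {c : ℝ}
    (hc : holderNormLE α s f c) : ∀ x ∈ s, ∀ y ∈ s, |f x - f y| ≤ c * dist x y ^ α := by
  obtain ⟨m, h, hm0, hh0, _, hhb, hmh⟩ := hc
  intro x hx y hy
  refine (hhb x hx y hy).trans (mul_le_mul_of_nonneg_right (by linarith)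
    (Real.rpow_nonneg dist_nonneg _))

lemma geom_calc' (M ρ : ℝ) (hρ : ρ ≠ 0) (j k : ℕ) :
    M * (1/ρ) ^ (j + k) * (ρ/2) ^ k * (ρ/2) ^ j = M * ((1:ℝ)/2) ^ (j + k) := by
  have h1 : (ρ/2) ^ k * (ρ/2) ^ j = (ρ/2) ^ (j + k) := by rw [← pow_add, Nat.add_comm]
  have h2 : (1/ρ) * (ρ/2) = (1:ℝ)/2 := by field_simp
  calc M * (1/ρ) ^ (j + k) * (ρ/2) ^ k * (ρ/2) ^ j
      = M * ((1/ρ) ^ (j + k) * ((ρ/2) ^ k * (ρ/2) ^ j)) := by ring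
    _ = M * ((1/ρ) ^ (j + k) * (ρ/2) ^ (j + k)) := by rw [h1]
    _ = M * ((1/ρ) * (ρ/2)) ^ (j + k) := by rw [mul_pow]
    _ = M * ((1:ℝ)/2) ^ (j + k) := by rw [h2]

lemma abs_mul3_le {x y z X Y Z : ℝ} (hx : |x| ≤ X) (hy : |y| ≤ Y) (hz : |z| ≤ Z) :
    |x * y * z| ≤ X * Y * Z := by
  have hX : 0 ≤ X := (abs_nonneg x).trans hx
  have hY : 0 ≤ Y := (abs_nonneg y).trans hy
  rw [abs_mul, abs_mul]
  exact mul_le_mul (mul_le_mul hx hy (abs_nonneg y) hX) hz (abs_nonneg z) (mul_nonneg hX hY)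

lemma local_bound {X : Type*} [PseudoMetricSpace X] {α : ℝ} {s : Set X}
    {A : ℝ → X → ℝ → ℝ} {εt ζt M ρ : ℝ} (hM : 0 < M)
    (hρ0 : 0 < ρ) (hρ1 : ρ < 1) {a : ℕ → ℕ → X → ℝ}
    (ha : ∀ j k, holderNormLE α s (a j k) (M * (1/ρ) ^ (j + k)))
    (hsum : ∀ ε ζ : ℝ, |ε - εt| < ρ → |ζ - ζt| < ρ → ∀ z ∈ s,
      HasSum (fun p : ℕ × ℕ => a p.1 p.2 z * (ε - εt) ^ p.2 * (ζ - ζt) ^ p.1) (A ε z ζ)) :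
    (∀ ε ζ, |ε - εt| < ρ/2 → |ζ - ζt| < ρ/2 → ∀ z ∈ s, |A ε z ζ| ≤ 8*M/ρ) ∧
    (∀ ε ζ, |ε - εt| < ρ/2 → |ζ - ζt| < ρ/2 → ∀ z ∈ s, ∀ z' ∈ s,
      |A ε z ζ - A ε z' ζ| ≤ 8*M/ρ * dist z z' ^ α) ∧
    (∀ ε ζ ζ', |ε - εt| < ρ/2 → |ζ - ζt| < ρ/2 → |ζ' - ζt| < ρ/2 → ∀ z ∈ s,
      |A ε z ζ - A ε z ζ'| ≤ 8*M/ρ * |ζ - ζ'|) := by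
  have hρne : ρ ≠ 0 := ne_of_gt hρ0
  have hhalf : ρ/2 < ρ := half_lt_self hρ0
  have hc4 : M * 4 ≤ 8*M/ρ := by
    rw [le_div_iff₀ hρ0]; nlinarith
  refine ⟨?_, ?_, ?_⟩
  · -- sup bound
    intro ε ζ hε hζ z hz
    have hS := hsum ε ζ (hε.trans hhalf) (hζ.trans hhalf) z hz
    have hg : HasSum (fun p : ℕ × ℕ => M * ((1:ℝ)/2) ^ (p.1 + p.2)) (M * 4) :=
      sum_half.mul_left M
    have hb : ∀ p : ℕ × ℕ, |a p.1 p.2 z * (ε - εt) ^ p.2 * (ζ - ζt) ^ p.1|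
        ≤ M * ((1:ℝ)/2) ^ (p.1 + p.2) := by
      rintro ⟨j, k⟩
      have h1 : |a j k z| ≤ M * (1/ρ) ^ (j + k) := holder_sup (ha j k) z hz
      have h2 : |(ε - εt) ^ k| ≤ (ρ/2) ^ k := by
        rw [abs_pow]; exact pow_le_pow_left₀ (abs_nonneg _) hε.le _
      have h3 : |(ζ - ζt) ^ j| ≤ (ρ/2) ^ j := by
        rw [abs_pow]; exact pow_le_pow_left₀ (abs_nonneg _) hζ.le _
      calc |a j k z * (ε - εt) ^ k * (ζ - ζt) ^ j|
          ≤ M * (1/ρ) ^ (j + k) * (ρ/2) ^ k * (ρ/2) ^ j := abs_mul3_le h1 h2 h3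
        _ = M * ((1:ℝ)/2) ^ (j + k) := geom_calc' M ρ hρne j k
    exact (abs_hasSum_le hS hg hb).trans hc4
  · -- Hölder in z
    intro ε ζ hε hζ z hz z' hz'
    set d : ℝ := dist z z' ^ α with hd
    have hd0 : 0 ≤ d := Real.rpow_nonneg dist_nonneg _
    have hS1 := hsum ε ζ (hε.trans hhalf) (hζ.trans hhalf) z hz
    have hS2 := hsum ε ζ (hε.trans hhalf) (hζ.trans hhalf) z' hz'
    have hS : HasSum (fun p : ℕ × ℕ =>
        (a p.1 p.2 z - a p.1 p.2 z') * (ε - εt) ^ p.2 * (ζ - ζt) ^ p.1)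
        (A ε z ζ - A ε z' ζ) := by
      have e : (fun p : ℕ × ℕ =>
          (a p.1 p.2 z - a p.1 p.2 z') * (ε - εt) ^ p.2 * (ζ - ζt) ^ p.1) = fun p =>
          a p.1 p.2 z * (ε - εt) ^ p.2 * (ζ - ζt) ^ p.1 -
            a p.1 p.2 z' * (ε - εt) ^ p.2 * (ζ - ζt) ^ p.1 := funext fun p => by ring
      rw [e]; exact hS1.sub hS2
    have hg : HasSum (fun p : ℕ × ℕ => (M * d) * ((1:ℝ)/2) ^ (p.1 + p.2)) ((M * d) * 4) :=
      sum_half.mul_left _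
    have hb : ∀ p : ℕ × ℕ, |(a p.1 p.2 z - a p.1 p.2 z') * (ε - εt) ^ p.2 * (ζ - ζt) ^ p.1|
        ≤ (M * d) * ((1:ℝ)/2) ^ (p.1 + p.2) := by
      rintro ⟨j, k⟩
      have h1 : |a j k z - a j k z'| ≤ M * (1/ρ) ^ (j + k) * d :=
        holder_holder (ha j k) z hz z' hz'
      have h2 : |(ε - εt) ^ k| ≤ (ρ/2) ^ k := by
        rw [abs_pow]; exact pow_le_pow_left₀ (abs_nonneg _) hε.le _
      have h3 : |(ζ - ζt) ^ j| ≤ (ρ/2) ^ j := by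
        rw [abs_pow]; exact pow_le_pow_left₀ (abs_nonneg _) hζ.le _
      calc |(a j k z - a j k z') * (ε - εt) ^ k * (ζ - ζt) ^ j|
          ≤ (M * (1/ρ) ^ (j + k) * d) * (ρ/2) ^ k * (ρ/2) ^ j := abs_mul3_le h1 h2 h3
        _ = (M * (1/ρ) ^ (j + k) * (ρ/2) ^ k * (ρ/2) ^ j) * d := by ring
        _ = (M * ((1:ℝ)/2) ^ (j + k)) * d := by rw [geom_calc' M ρ hρne j k]
        _ = (M * d) * ((1:ℝ)/2) ^ (j + k) := by ring
    have := abs_hasSum_le hS hg hb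
    calc |A ε z ζ - A ε z' ζ| ≤ (M * d) * 4 := this
      _ = (M * 4) * d := by ring
      _ ≤ (8*M/ρ) * d := mul_le_mul_of_nonneg_right hc4 hd0
  · -- Lipschitz in ζ
    intro ε ζ ζ' hε hζ hζ' z hz
    set t : ℝ := |ζ - ζ'| with ht
    have ht0 : 0 ≤ t := abs_nonneg _
    have hS1 := hsum ε ζ (hε.trans hhalf) (hζ.trans hhalf) z hz
    have hS2 := hsum ε ζ' (hε.trans hhalf) (hζ'.trans hhalf) z hz
    have hS : HasSum (fun p : ℕ × ℕ =>
        a p.1 p.2 z * (ε - εt) ^ p.2 * ((ζ - ζt) ^ p.1 - (ζ' - ζt) ^ p.1))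
        (A ε z ζ - A ε z ζ') := by
      have e : (fun p : ℕ × ℕ =>
          a p.1 p.2 z * (ε - εt) ^ p.2 * ((ζ - ζt) ^ p.1 - (ζ' - ζt) ^ p.1)) = fun p =>
          a p.1 p.2 z * (ε - εt) ^ p.2 * (ζ - ζt) ^ p.1 -
            a p.1 p.2 z * (ε - εt) ^ p.2 * (ζ' - ζt) ^ p.1 := funext fun p => by ring
      rw [e]; exact hS1.sub hS2
    have hg : HasSum (fun p : ℕ × ℕ =>
        (M * (2/ρ) * t) * ((p.1 : ℝ) * ((1:ℝ)/2) ^ (p.1 + p.2))) ((M * (2/ρ) * t) * 4) :=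
      sum_jhalf.mul_left _
    have hb : ∀ p : ℕ × ℕ,
        |a p.1 p.2 z * (ε - εt) ^ p.2 * ((ζ - ζt) ^ p.1 - (ζ' - ζt) ^ p.1)|
        ≤ (M * (2/ρ) * t) * ((p.1 : ℝ) * ((1:ℝ)/2) ^ (p.1 + p.2)) := by
      rintro ⟨j, k⟩
      have h1 : |a j k z| ≤ M * (1/ρ) ^ (j + k) := holder_sup (ha j k) z hz
      have h2 : |(ε - εt) ^ k| ≤ (ρ/2) ^ k := by
        rw [abs_pow]; exact pow_le_pow_left₀ (abs_nonneg _) hε.le _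
      have h3 : |(ζ - ζt) ^ j - (ζ' - ζt) ^ j|
          ≤ (j : ℝ) * ((ρ/2) ^ j / (ρ/2)) * |(ζ - ζt) - (ζ' - ζt)| :=
        pow_sub_pow_abs_le (by linarith) hζ.le hζ'.le j
      have h3' : |(ζ - ζt) ^ j - (ζ' - ζt) ^ j| ≤ (j : ℝ) * ((ρ/2) ^ j / (ρ/2)) * t := by
        have : (ζ - ζt) - (ζ' - ζt) = ζ - ζ' := by ring
        rwa [this] at h3
      calc |a j k z * (ε - εt) ^ k * ((ζ - ζt) ^ j - (ζ' - ζt) ^ j)|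
          ≤ M * (1/ρ) ^ (j + k) * (ρ/2) ^ k * ((j : ℝ) * ((ρ/2) ^ j / (ρ/2)) * t) :=
            abs_mul3_le h1 h2 h3'
        _ = (M * (1/ρ) ^ (j + k) * (ρ/2) ^ k * (ρ/2) ^ j) * ((j : ℝ) * (2/ρ) * t) := by
            field_simp
        _ = (M * ((1:ℝ)/2) ^ (j + k)) * ((j : ℝ) * (2/ρ) * t) := by
            rw [geom_calc' M ρ hρne j k]
        _ = (M * (2/ρ) * t) * ((j : ℝ) * ((1:ℝ)/2) ^ (j + k)) := by ring
    have := abs_hasSum_le hS hg hb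
    calc |A ε z ζ - A ε z ζ'| ≤ (M * (2/ρ) * t) * 4 := this
      _ = 8*M/ρ * t := by ring

theorem stmt_8 (n : ℕ) (hn : 2 ≤ n) (ε₀ α : ℝ) (hε₀ : 0 < ε₀) (hα : α ∈ Set.Ioo (0 : ℝ) 1)
    (A : ℝ → EuclideanSpace ℝ (Fin (n - 1)) → ℝ → ℝ)
    -- real analyticity of `(ε,ζ) ↦ A(ε,·,ζ)` into `C^{0,α}(closure B_{n-1}(0,1))`:
    -- local power series expansions with geometric `C^{0,α}` bounds on the coefficients
    (hA : ∀ εt ∈ Set.Ioo (-ε₀) ε₀, ∀ ζt : ℝ, ∃ M > (0 : ℝ), ∃ ρ ∈ Set.Ioo (0 : ℝ) 1,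
      ∃ a : ℕ → ℕ → (EuclideanSpace ℝ (Fin (n - 1)) → ℝ),
        (∀ j k : ℕ, holderNormLE α (Metric.closedBall (0 : EuclideanSpace ℝ (Fin (n - 1))) 1)
          (a j k) (M * (1 / ρ) ^ (j + k))) ∧
        ∀ ε ζ : ℝ, |ε - εt| < ρ → |ζ - ζt| < ρ →
          ∀ z ∈ Metric.closedBall (0 : EuclideanSpace ℝ (Fin (n - 1))) 1,
            HasSum (fun p : ℕ × ℕ => a p.1 p.2 z * (ε - εt) ^ p.2 * (ζ - ζt) ^ p.1) (A ε z ζ))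
    (p q : ℝ) (hpq : p < q) (K : Set ℝ) (hK : IsCompact K) (hKsub : K ⊆ Set.Ioo (-ε₀) ε₀) :
    ∃ C > (0 : ℝ), ∀ ε ∈ K,
      holderNormLE α
        ((Metric.closedBall (0 : EuclideanSpace ℝ (Fin (n - 1))) 1) ×ˢ Set.Icc p q)
        (fun x => A ε x.1 x.2) C := by
  obtain ⟨hα0, hα1⟩ := hα
  rcases K.eq_empty_or_nonempty with hKe | ⟨k0, hk0⟩
  · refine ⟨1, one_pos, ?_⟩
    intro ε hε
    rw [hKe] at hε
    exact absurd hε (Set.notMem_empty ε)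
  set Z := Metric.closedBall (0 : EuclideanSpace ℝ (Fin (n - 1))) 1 with hZ
  set S : Set (ℝ × ℝ) := K ×ˢ Set.Icc p q with hS
  have hScpt : IsCompact S := hK.prod isCompact_Icc
  have hloc : ∀ x : ℝ × ℝ, ∃ r B : ℝ, 0 < r ∧ 1 ≤ B ∧ (x ∈ S →
      (∀ ε ζ, |ε - x.1| < r → |ζ - x.2| < r → ∀ z ∈ Z, |A ε z ζ| ≤ B) ∧
      (∀ ε ζ, |ε - x.1| < r → |ζ - x.2| < r → ∀ z ∈ Z, ∀ z' ∈ Z,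
        |A ε z ζ - A ε z' ζ| ≤ B * dist z z' ^ α) ∧
      (∀ ε ζ ζ', |ε - x.1| < r → |ζ - x.2| < r → |ζ' - x.2| < r → ∀ z ∈ Z,
        |A ε z ζ - A ε z ζ'| ≤ B * |ζ - ζ'|)) := by
    intro x
    by_cases hx : x ∈ S
    · obtain ⟨M, hM, ρ, hρ, a, ha, hsum⟩ := hA x.1 (hKsub hx.1) x.2
      obtain ⟨L1, L2, L3⟩ := local_bound (A := A) hM hρ.1 hρ.2 ha hsum
      refine ⟨ρ/2, max 1 (8*M/ρ), by linarith [hρ.1], le_max_left _ _, fun _ => ⟨?_, ?_, ?_⟩⟩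
      · intro ε ζ hε hζ z hz
        exact (L1 ε ζ hε hζ z hz).trans (le_max_right _ _)
      · intro ε ζ hε hζ z hz z' hz'
        exact (L2 ε ζ hε hζ z hz z' hz').trans
          (mul_le_mul_of_nonneg_right (le_max_right _ _) (Real.rpow_nonneg dist_nonneg _))
      · intro ε ζ ζ' hε hζ hζ' z hz
        exact (L3 ε ζ ζ' hε hζ hζ' z hz).trans
          (mul_le_mul_of_nonneg_right (le_max_right _ _) (abs_nonneg _))
    · exact ⟨1, 1, one_pos, le_refl 1, fun hx' => absurd hx' hx⟩
  choose r B hr hB1 hbounds using hloc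
  have hcover : S ⊆ ⋃ x ∈ S, Metric.ball x (r x / 2) := fun x hx =>
    Set.mem_biUnion hx (Metric.mem_ball_self (by linarith [hr x]))
  obtain ⟨b, hbS, hbfin, hbcov⟩ := hScpt.elim_finite_subcover_image
    (fun x _ => Metric.isOpen_ball) hcover
  have hSne : S.Nonempty := ⟨(k0, p), Set.mk_mem_prod hk0 (Set.mem_Icc.mpr ⟨le_refl p, hpq.le⟩)⟩
  obtain ⟨x0, hx0⟩ := hSne
  have hx0' := hbcov hx0
  simp only [Set.mem_iUnion] at hx0'
  obtain ⟨i0, hi0b, _⟩ := hx0'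
  have hTne : hbfin.toFinset.Nonempty := ⟨i0, hbfin.mem_toFinset.mpr hi0b⟩
  set T := hbfin.toFinset with hT
  set δ : ℝ := T.inf' hTne (fun x => min 1 (r x / 2)) with hδ
  set Bm : ℝ := T.sup' hTne B with hBm
  have hδ0 : 0 < δ := by
    rw [hδ, Finset.lt_inf'_iff]
    exact fun i _ => lt_min one_pos (half_pos (hr i))
  have hδ1 : δ ≤ 1 :=
    (Finset.inf'_le _ (hbfin.mem_toFinset.mpr hi0b)).trans (min_le_left _ _)
  have hδr : ∀ i ∈ T, δ ≤ r i / 2 := fun i hi =>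
    (Finset.inf'_le _ hi).trans (min_le_right _ _)
  have hBm1 : 1 ≤ Bm := (hB1 i0).trans (Finset.le_sup' B (hbfin.mem_toFinset.mpr hi0b))
  have hBmB : ∀ i ∈ T, B i ≤ Bm := fun i hi => Finset.le_sup' B hi
  have hδα : 0 < δ ^ α := Real.rpow_pos_of_pos hδ0 α
  have hh0 : 0 ≤ 2*Bm/δ^α + 2*Bm := by positivity
  refine ⟨Bm + (2*Bm/δ^α + 2*Bm), by positivity, fun ε hε => ?_⟩
  have pick : ∀ ζ ∈ Set.Icc p q, ∃ i ∈ T, |ε - i.1| < r i / 2 ∧ |ζ - i.2| < r i / 2 := by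
    intro ζ hζmem
    have hmem : (ε, ζ) ∈ S := Set.mk_mem_prod hε hζmem
    have h2 := hbcov hmem
    simp only [Set.mem_iUnion] at h2
    obtain ⟨i, hib, hdist⟩ := h2
    rw [Metric.mem_ball, Prod.dist_eq, max_lt_iff, Real.dist_eq, Real.dist_eq] at hdist
    exact ⟨i, hbfin.mem_toFinset.mpr hib, hdist.1, hdist.2⟩
  have hiS : ∀ i ∈ T, i ∈ S := fun i hi => hbS (hbfin.mem_toFinset.mp hi)
  have supb : ∀ x ∈ Z ×ˢ Set.Icc p q, |A ε x.1 x.2| ≤ Bm := by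
    rintro ⟨z, ζ⟩ hxmem
    obtain ⟨hz, hζmem⟩ := hxmem
    obtain ⟨i, hiT, hεi, hζi⟩ := pick ζ hζmem
    have hri := hr i
    have hb := (hbounds i (hiS i hiT)).1 ε ζ (by linarith) (by linarith) z hz
    exact hb.trans (hBmB i hiT)
  refine ⟨Bm, 2*Bm/δ^α + 2*Bm, by linarith, hh0, supb, ?_, le_refl _⟩
  rintro ⟨z, ζ⟩ hxmem ⟨z', ζ'⟩ hymem
  obtain ⟨hz, hζmem⟩ := hxmem
  obtain ⟨hz', hζ'mem⟩ := hymem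
  set x : (EuclideanSpace ℝ (Fin (n - 1))) × ℝ := (z, ζ) with hx
  set y : (EuclideanSpace ℝ (Fin (n - 1))) × ℝ := (z', ζ') with hy
  set d : ℝ := dist x y with hd
  have hd0 : 0 ≤ d := dist_nonneg
  have hdα0 : 0 ≤ d ^ α := Real.rpow_nonneg hd0 _
  have hdz : dist z z' ≤ d := by rw [hd, Prod.dist_eq]; exact le_max_left _ _
  have hdζ : |ζ - ζ'| ≤ d := by
    rw [hd, Prod.dist_eq, ← Real.dist_eq]; exact le_max_right _ _
  rcases le_or_gt δ d with hcase | hcase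
  · -- far apart
    have h1 : |A ε z ζ| ≤ Bm := supb (z, ζ) ⟨hz, hζmem⟩
    have h2 : |A ε z' ζ'| ≤ Bm := supb (z', ζ') ⟨hz', hζ'mem⟩
    have hδd : δ ^ α ≤ d ^ α := Real.rpow_le_rpow hδ0.le hcase hα0.le
    calc |A ε z ζ - A ε z' ζ'| ≤ |A ε z ζ| + |A ε z' ζ'| := abs_sub _ _
      _ ≤ 2 * Bm := by linarith
      _ = (2*Bm/δ^α) * δ^α := by field_simp
      _ ≤ (2*Bm/δ^α) * d^α := by
          apply mul_le_mul_of_nonneg_left hδd (by positivity)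
      _ ≤ (2*Bm/δ^α + 2*Bm) * d^α := by nlinarith
  · -- close
    obtain ⟨i, hiT, hεi, hζi⟩ := pick ζ hζmem
    have hri := hr i
    have hδri := hδr i hiT
    have hζ'i : |ζ' - i.2| < r i := by
      have : |ζ' - i.2| ≤ |ζ' - ζ| + |ζ - i.2| := abs_sub_le _ _ _
      have h4 : |ζ' - ζ| = |ζ - ζ'| := abs_sub_comm _ _
      linarith [hdζ]
    have hBi := hbounds i (hiS i hiT)
    have T1 : |A ε z ζ - A ε z' ζ| ≤ Bm * d ^ α := by
      have := hBi.2.1 ε ζ (by linarith) (by linarith) z hz z' hz'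
      refine this.trans ?_
      have hzα : dist z z' ^ α ≤ d ^ α := Real.rpow_le_rpow dist_nonneg hdz hα0.le
      have := mul_le_mul (hBmB i hiT) hzα (Real.rpow_nonneg dist_nonneg _)
        (by linarith : (0:ℝ) ≤ Bm)
      exact this
    have T2 : |A ε z' ζ - A ε z' ζ'| ≤ Bm * d ^ α := by
      have hb := hBi.2.2 ε ζ ζ' (by linarith) (by linarith) hζ'i z' hz'
      refine hb.trans ?_
      have ht : |ζ - ζ'| ≤ d ^ α := by
        rcases eq_or_lt_of_le (abs_nonneg (ζ - ζ')) with h0 | h0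
        · rw [← h0]; exact hdα0
        · have h1 : |ζ - ζ'| ≤ 1 := by linarith
          have h2 : |ζ - ζ'| = |ζ - ζ'| ^ (1:ℝ) := (Real.rpow_one _).symm
          have h3 : |ζ - ζ'| ^ (1:ℝ) ≤ |ζ - ζ'| ^ α :=
            Real.rpow_le_rpow_of_exponent_ge h0 h1 hα1.le
          have h4 : |ζ - ζ'| ^ α ≤ d ^ α := Real.rpow_le_rpow (abs_nonneg _) hdζ hα0.le
          calc |ζ - ζ'| = |ζ - ζ'| ^ (1:ℝ) := h2
            _ ≤ |ζ - ζ'| ^ α := h3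
            _ ≤ d ^ α := h4
      exact mul_le_mul (hBmB i hiT) ht (abs_nonneg _) (by linarith : (0:ℝ) ≤ Bm)
    calc |A ε z ζ - A ε z' ζ'|
        ≤ |A ε z ζ - A ε z' ζ| + |A ε z' ζ - A ε z' ζ'| := abs_sub_le _ _ _
      _ ≤ 2 * Bm * d ^ α := by linarith
      _ ≤ (2*Bm/δ^α + 2*Bm) * d^α := by
          apply mul_le_mul_of_nonneg_right _ hdα0
          have : 0 ≤ 2*Bm/δ^α := by positivity
          linarith
end

section
/- Let A : (-ε₀,ε₀) × closure(B_{n-1}(0,1)) × ℝ → ℝ and suppose the map M_A taking (ε,ζ) to z ↦ A(ε,z,ζ) is real analytic from (-ε₀,ε₀) × ℝ to C^{1,α}(closure B_{n-1}(0,1)). Then for every open bounded interval J of ℝ and every compact set E ⊂ (-ε₀,ε₀) there exists C > 0 such that sup_{ε∈E} ‖A(ε,·,·)‖_{C^{1,α}(closure B_{n-1}(0,1) × closure J)} ≤ C. -/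
open Metric Set Filter


lemma helper_two_rpow {α d : ℝ} (hα0 : 0 < α) (hα1 : α ≤ 1) (h0 : 0 ≤ d) (h2 : d ≤ 2) :
    d ≤ 2 * d ^ α := by
  rcases eq_or_lt_of_le h0 with h|h
  · rw [← h, Real.zero_rpow hα0.ne']; norm_num
  · have h1 : d = d ^ α * d ^ (1 - α) := by
      rw [← Real.rpow_add h, add_sub_cancel, Real.rpow_one]
    have h3 : d ^ (1 - α) ≤ 2 ^ (1 - α) := Real.rpow_le_rpow h0 h2 (by linarith)
    have h4 : (2:ℝ) ^ (1 - α) ≤ 2 ^ (1:ℝ) := Real.rpow_le_rpow_of_exponent_le (by norm_num) (by linarith)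
    have h5 : (0:ℝ) ≤ d ^ α := Real.rpow_nonneg h0 _
    rw [Real.rpow_one] at h4
    calc d = d ^ α * d ^ (1-α) := h1
    _ ≤ d ^ α * 2 := by nlinarith
    _ = 2 * d ^ α := by ring

lemma helper_pow_sub_pow {s t r : ℝ} (hs : |s| ≤ r) (ht : |t| ≤ r) (m : ℕ) :
    |s ^ m - t ^ m| ≤ m * r ^ (m - 1) * |s - t| := by
  have hr : 0 ≤ r := le_trans (abs_nonneg s) hs
  rw [← geom_sum₂_mul s t m, abs_mul]
  gcongr
  calc |∑ i ∈ Finset.range m, s ^ i * t ^ (m - 1 - i)|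
      ≤ ∑ i ∈ Finset.range m, |s ^ i * t ^ (m - 1 - i)| := Finset.abs_sum_le_sum_abs _ _
    _ ≤ ∑ i ∈ Finset.range m, r ^ (m - 1) := by
        apply Finset.sum_le_sum
        intro i hi
        rw [abs_mul, abs_pow, abs_pow]
        have hi' : i + (m - 1 - i) = m - 1 := by
          have := Finset.mem_range.1 hi; omega
        have e1 : |s| ^ i * |t| ^ (m - 1 - i) ≤ r ^ i * r ^ (m - 1 - i) :=
          mul_le_mul (pow_le_pow_left₀ (abs_nonneg s) hs i)
            (pow_le_pow_left₀ (abs_nonneg t) ht _) (by positivity) (by positivity)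
        calc |s| ^ i * |t| ^ (m - 1 - i) ≤ r ^ i * r ^ (m - 1 - i) := e1
          _ = r ^ (m - 1) := by rw [← pow_add, hi']
    _ = m * r ^ (m - 1) := by rw [Finset.sum_const, Finset.card_range, nsmul_eq_mul]

lemma helper_pow_sub_mul {x : ℝ} (h0 : 0 ≤ x) (h1 : x ≤ 1) (j n : ℕ) :
    x ^ (j - n) * x ^ n ≤ x ^ j := by
  rcases le_or_gt n j with h|h
  · rw [← pow_add, Nat.sub_add_cancel h]
  · rw [Nat.sub_eq_zero_of_le h.le, pow_zero, one_mul]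
    exact pow_le_pow_of_le_one h0 h1 h.le

lemma core_lemma {X : Type*} [NormedAddCommGroup X] [NormedSpace ℝ X]
    {α : ℝ} (hα0 : 0 < α) {s : Set X} (hs : Convex ℝ s)
    {ι : Type*} (c : ι → X → ℝ) (Φ : ι → X → X →L[ℝ] ℝ) (u : ι → ℝ)
    (hu : Summable u) (hu0 : ∀ i, 0 ≤ u i)
    (hderiv : ∀ i, ∀ x ∈ s, HasFDerivWithinAt (c i) (Φ i x) s x)
    (hΦ : ∀ i, ∀ x ∈ s, ‖Φ i x‖ ≤ u i)
    (hH : ∀ i, ∀ x ∈ s, ∀ y ∈ s, ‖Φ i x - Φ i y‖ ≤ u i * dist x y ^ α)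
    {f : X → ℝ} (hf : ∀ x ∈ s, HasSum (fun i => c i x) (f x)) :
    ∀ x ∈ s, HasFDerivWithinAt f (∑' i, Φ i x) s x := by
  have hsummΦ : ∀ y ∈ s, Summable (fun i => Φ i y) := fun y hy =>
    Summable.of_norm_bounded hu (fun i => hΦ i y hy)
  have hU0 : 0 ≤ ∑' i, u i := tsum_nonneg hu0
  intro x hx
  have taylor : ∀ y ∈ s, ‖f y - f x - (∑' i, Φ i x) (y - x)‖ ≤
      (∑' i, u i) * dist x y ^ α * ‖y - x‖ := by
    intro y hy
    have hterm : ∀ i, ‖c i y - c i x - Φ i x (y - x)‖ ≤ u i * dist x y ^ α * ‖y - x‖ := by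
      intro i
      have hseg : segment ℝ x y ⊆ s := hs.segment_subset hx hy
      have hgd : ∀ t ∈ segment ℝ x y,
          HasFDerivWithinAt (fun t => c i t - Φ i x t) (Φ i t - Φ i x) (segment ℝ x y) t := by
        intro t ht
        exact ((hderiv i t (hseg ht)).mono hseg).sub ((Φ i x).hasFDerivAt.hasFDerivWithinAt)
      have hbd : ∀ t ∈ segment ℝ x y, ‖Φ i t - Φ i x‖ ≤ u i * dist x y ^ α := by
        intro t ht
        refine le_trans (hH i t (hseg ht) x hx) (mul_le_mul_of_nonneg_left ?_ (hu0 i))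
        refine Real.rpow_le_rpow dist_nonneg ?_ hα0.le
        have := dist_add_dist_of_mem_segment ht
        have h2 : (0:ℝ) ≤ dist t y := dist_nonneg
        rw [dist_comm t x]; linarith
      have key := Convex.norm_image_sub_le_of_norm_hasFDerivWithin_le hgd hbd
        (convex_segment x y) (left_mem_segment ℝ x y) (right_mem_segment ℝ x y)
      have heq : (c i y - Φ i x y) - (c i x - Φ i x x) = c i y - c i x - Φ i x (y - x) := by
        rw [map_sub]; ring
      rw [heq] at key; exact key
    have heq : f y - f x - (∑' i, Φ i x) (y - x)
        = ∑' i, (c i y - c i x - Φ i x (y - x)) := by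
      have h1 : f y - f x = ∑' i, (c i y - c i x) := ((hf y hy).sub (hf x hx)).tsum_eq.symm
      have h2 : (∑' i, Φ i x) (y - x) = ∑' i, Φ i x (y - x) :=
        (ContinuousLinearMap.apply ℝ ℝ (y - x)).map_tsum (hsummΦ x hx)
      have hs2 : Summable fun i => Φ i x (y - x) :=
        (ContinuousLinearMap.apply ℝ ℝ (y - x)).summable (hsummΦ x hx)
      rw [h1, h2]
      exact (Summable.tsum_sub ((hf y hy).sub (hf x hx)).summable hs2).symm
    rw [heq]
    exact tsum_of_norm_bounded ((hu.hasSum.mul_right (dist x y ^ α)).mul_right ‖y - x‖)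
      (fun i => hterm i)
  apply HasFDerivWithinAt.of_isLittleO
  rw [Asymptotics.isLittleO_iff]
  intro C hC
  set U := ∑' i, u i with hU
  have hδpos : (0:ℝ) < (C / (U + 1)) ^ α⁻¹ := by positivity
  have hball : Metric.ball x ((C / (U+1)) ^ α⁻¹) ∈ nhdsWithin x s :=
    nhdsWithin_le_nhds (Metric.ball_mem_nhds x hδpos)
  filter_upwards [hball, self_mem_nhdsWithin] with y hy hys
  have hdy : dist x y < (C / (U+1)) ^ α⁻¹ := by
    rw [dist_comm]; exact mem_ball.1 hy
  have h1 : dist x y ^ α ≤ C / (U + 1) := by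
    calc dist x y ^ α ≤ ((C / (U+1)) ^ α⁻¹) ^ α :=
        Real.rpow_le_rpow dist_nonneg hdy.le hα0.le
      _ = C / (U + 1) := Real.rpow_inv_rpow (by positivity) hα0.ne'
  have h2 := taylor y hys
  have h3 : U * dist x y ^ α ≤ C := by
    have hd0 : (0:ℝ) ≤ dist x y ^ α := Real.rpow_nonneg dist_nonneg _
    have hC' : U * (C / (U+1)) ≤ C := by
      rw [div_eq_inv_mul]
      have hle : U / (U+1) ≤ 1 := by
        rw [div_le_one (by linarith)]; linarith
      have : U * ((U+1)⁻¹ * C) = (U / (U+1)) * C := by ring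
      rw [this]; nlinarith
    nlinarith
  calc ‖f y - f x - (∑' i, Φ i x) (y - x)‖ ≤ U * dist x y ^ α * ‖y - x‖ := h2
    _ ≤ C * ‖y - x‖ := by
        have h4 := norm_nonneg (y - x)
        have hd0 : (0:ℝ) ≤ dist x y ^ α := Real.rpow_nonneg dist_nonneg _
        nlinarith


lemma helper_two_rpow' {α d : ℝ} (hα0 : 0 < α) (hα1 : α ≤ 1) (h0 : 0 ≤ d) (h2 : d ≤ 2) :
    d ≤ 2 * d ^ α := by
  rcases eq_or_lt_of_le h0 with h|h
  · rw [← h, Real.zero_rpow hα0.ne']; norm_num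
  · have h1 : d = d ^ α * d ^ (1 - α) := by
      rw [← Real.rpow_add h, add_sub_cancel, Real.rpow_one]
    have h3 : d ^ (1 - α) ≤ 2 ^ (1 - α) := Real.rpow_le_rpow h0 h2 (by linarith)
    have h4 : (2:ℝ) ^ (1 - α) ≤ 2 ^ (1:ℝ) := Real.rpow_le_rpow_of_exponent_le (by norm_num) (by linarith)
    have h5 : (0:ℝ) ≤ d ^ α := Real.rpow_nonneg h0 _
    rw [Real.rpow_one] at h4
    calc d = d ^ α * d ^ (1-α) := h1
    _ ≤ d ^ α * 2 := by nlinarith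
    _ = 2 * d ^ α := by ring

lemma helper_pow_sub_pow' {s t r : ℝ} (hs : |s| ≤ r) (ht : |t| ≤ r) (m : ℕ) :
    |s ^ m - t ^ m| ≤ m * r ^ (m - 1) * |s - t| := by
  have hr : 0 ≤ r := le_trans (abs_nonneg s) hs
  rw [← geom_sum₂_mul s t m, abs_mul]
  gcongr
  calc |∑ i ∈ Finset.range m, s ^ i * t ^ (m - 1 - i)|
      ≤ ∑ i ∈ Finset.range m, |s ^ i * t ^ (m - 1 - i)| := Finset.abs_sum_le_sum_abs _ _
    _ ≤ ∑ i ∈ Finset.range m, r ^ (m - 1) := by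
        apply Finset.sum_le_sum
        intro i hi
        rw [abs_mul, abs_pow, abs_pow]
        have hi' : i + (m - 1 - i) = m - 1 := by
          have := Finset.mem_range.1 hi; omega
        have e1 : |s| ^ i * |t| ^ (m - 1 - i) ≤ r ^ i * r ^ (m - 1 - i) :=
          mul_le_mul (pow_le_pow_left₀ (abs_nonneg s) hs i)
            (pow_le_pow_left₀ (abs_nonneg t) ht _) (by positivity) (by positivity)
        calc |s| ^ i * |t| ^ (m - 1 - i) ≤ r ^ i * r ^ (m - 1 - i) := e1
          _ = r ^ (m - 1) := by rw [← pow_add, hi']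
    _ = m * r ^ (m - 1) := by rw [Finset.sum_const, Finset.card_range, nsmul_eq_mul]

lemma abs_mul_sub (A A' B B' : ℝ) : |A * B - A' * B'| ≤ |A - A'| * |B| + |A'| * |B - B'| := by
  have : A * B - A' * B' = (A - A') * B + A' * (B - B') := by ring
  rw [this]
  exact (abs_add_le _ _).trans (by rw [abs_mul, abs_mul])

lemma norm_comb_sub {V : Type*} [NormedAddCommGroup V] [NormedSpace ℝ V]
    (Ax Ay Bx By : ℝ) (S Tx Ty : V) :
    ‖(Ax • S + Bx • Tx) - (Ay • S + By • Ty)‖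
      ≤ |Ax - Ay| * ‖S‖ + (|Bx - By| * ‖Tx‖ + |By| * ‖Tx - Ty‖) := by
  have heq : (Ax • S + Bx • Tx) - (Ay • S + By • Ty)
      = (Ax - Ay) • S + ((Bx - By) • Tx + By • (Tx - Ty)) := by
    rw [sub_smul, sub_smul, smul_sub]; abel
  rw [heq]
  refine le_trans (norm_add_le _ _) (add_le_add ?_ (le_trans (norm_add_le _ _) ?_))
  · rw [norm_smul, Real.norm_eq_abs]
  · rw [norm_smul, norm_smul, Real.norm_eq_abs, Real.norm_eq_abs]

lemma term_lemma {E : Type*} [NormedAddCommGroup E] [NormedSpace ℝ E]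
    {α r : ℝ} (hα0 : 0 < α) (hα1 : α ≤ 1) (hr0 : 0 < r) (hr1 : r ≤ 1/2)
    (ζt e : ℝ) (j : ℕ) {N : ℝ} (hN : 0 ≤ N)
    {a : E → ℝ} (ha : DifferentiableOn ℝ a (closedBall 0 1))
    (ha0 : ∀ z ∈ closedBall (0:E) 1, |a z| ≤ N)
    (ha1 : ∀ z ∈ closedBall (0:E) 1, ‖fderivWithin ℝ a (closedBall 0 1) z‖ ≤ N)
    (haH : ∀ z ∈ closedBall (0:E) 1, ∀ w ∈ closedBall (0:E) 1,
      ‖fderivWithin ℝ a (closedBall 0 1) z - fderivWithin ℝ a (closedBall 0 1) w‖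
        ≤ N * dist z w ^ α) :
    ∃ Φ : E × ℝ → (E × ℝ →L[ℝ] ℝ),
      (∀ x ∈ (closedBall (0:E) 1) ×ˢ Icc (ζt - r) (ζt + r),
        HasFDerivWithinAt (fun y : E × ℝ => a y.1 * e * (y.2 - ζt) ^ j) (Φ x)
          ((closedBall (0:E) 1) ×ˢ Icc (ζt - r) (ζt + r)) x) ∧
      (∀ x ∈ (closedBall (0:E) 1) ×ˢ Icc (ζt - r) (ζt + r),
        |a x.1 * e * (x.2 - ζt) ^ j|
          ≤ N * |e| * (r^j + 4*j*r^(j-1) + 2*j*j*r^(j-2))) ∧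
      (∀ x ∈ (closedBall (0:E) 1) ×ˢ Icc (ζt - r) (ζt + r),
        ‖Φ x‖ ≤ N * |e| * (r^j + 4*j*r^(j-1) + 2*j*j*r^(j-2))) ∧
      (∀ x ∈ (closedBall (0:E) 1) ×ˢ Icc (ζt - r) (ζt + r),
       ∀ y ∈ (closedBall (0:E) 1) ×ˢ Icc (ζt - r) (ζt + r),
        ‖Φ x - Φ y‖ ≤ N * |e| * (r^j + 4*j*r^(j-1) + 2*j*j*r^(j-2)) * dist x y ^ α) := by
  set B : Set E := closedBall (0:E) 1 with hBdef
  set T : Set ℝ := Icc (ζt - r) (ζt + r) with hTdef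
  set D : E → (E →L[ℝ] ℝ) := fun z => fderivWithin ℝ a B z with hDdef
  set sndL := ContinuousLinearMap.snd ℝ E ℝ
  set fstL := ContinuousLinearMap.fst ℝ E ℝ
  set u : ℝ := N * |e| * (r^j + 4*j*r^(j-1) + 2*j*j*r^(j-2)) with hu
  -- membership facts
  have hmem : ∀ x : E × ℝ, x ∈ B ×ˢ T → x.1 ∈ B ∧ |x.2 - ζt| ≤ r := by
    intro x hx
    refine ⟨hx.1, abs_le.2 ⟨by linarith [hx.2.1], by linarith [hx.2.2]⟩⟩
  have hpowr : ∀ (w : ℝ), |w - ζt| ≤ r → ∀ m : ℕ, |(w - ζt) ^ m| ≤ r ^ m := by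
    intro w hw m
    rw [abs_pow]; exact pow_le_pow_left₀ (abs_nonneg _) hw m
  -- Lipschitz bound for a
  have halip : ∀ z ∈ B, ∀ w ∈ B, |a z - a w| ≤ N * ‖z - w‖ := by
    intro z hz w hw
    exact Convex.norm_image_sub_le_of_norm_hasFDerivWithin_le
      (fun t ht => (ha t ht).hasFDerivWithinAt) ha1 (convex_closedBall 0 1) hw hz
  refine ⟨fun x => (a x.1 * e * ((j:ℝ) * (x.2 - ζt) ^ (j-1) * 1)) • sndL
      + ((x.2 - ζt) ^ j * e) • ((D x.1).comp fstL), ?_, ?_, ?_, ?_⟩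
  · -- derivative
    intro x hx
    have h1 : HasFDerivWithinAt (fun y : E × ℝ => a y.1) ((D x.1).comp fstL) (B ×ˢ T) x :=
      HasFDerivWithinAt.comp x ((ha x.1 hx.1).hasFDerivWithinAt) hasFDerivWithinAt_fst
        (fun y hy => hy.1)
    have h1' := h1.mul_const e
    have hd : HasDerivAt (fun t : ℝ => (t - ζt) ^ j) ((j:ℝ) * (x.2 - ζt) ^ (j-1) * 1) x.2 := by
      simpa using ((hasDerivAt_id x.2).sub_const ζt).fun_pow j
    have h2 : HasFDerivWithinAt (fun y : E × ℝ => (y.2 - ζt) ^ j)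
        (((j:ℝ) * (x.2 - ζt) ^ (j-1) * 1) • sndL) (B ×ˢ T) x :=
      hd.comp_hasFDerivWithinAt x hasFDerivWithinAt_snd
    have h3 := h1'.fun_mul h2
    simpa only [smul_smul] using h3
  · -- sup bound
    intro x hx
    beta_reduce
    obtain ⟨hx1, hx2⟩ := hmem x hx
    have h1 : |a x.1 * e * (x.2 - ζt) ^ j| ≤ N * |e| * r ^ j := by
      rw [abs_mul, abs_mul]
      exact mul_le_mul (mul_le_mul (ha0 _ hx1) le_rfl (abs_nonneg _) hN)
        (hpowr _ hx2 j) (abs_nonneg _) (by positivity)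
    have h2 : N * |e| * r ^ j ≤ u := by
      rw [hu]
      have hne : (0:ℝ) ≤ N * |e| := by positivity
      have t1 : (0:ℝ) ≤ 4*j*r^(j-1) := by positivity
      have t2 : (0:ℝ) ≤ 2*j*j*r^(j-2) := by positivity
      rw [mul_assoc, mul_assoc]
      refine mul_le_mul_of_nonneg_left (mul_le_mul_of_nonneg_left ?_ (abs_nonneg e)) hN
      linarith
    linarith
  · -- derivative bound
    intro x hx
    beta_reduce
    obtain ⟨hx1, hx2⟩ := hmem x hx
    have h1 : ‖(a x.1 * e * ((j:ℝ) * (x.2 - ζt) ^ (j-1) * 1)) • sndL‖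
        ≤ N * |e| * (j * r ^ (j-1)) := by
      refine le_trans (ContinuousLinearMap.opNorm_smul_le _ _) ?_
      rw [Real.norm_eq_abs]
      calc |a x.1 * e * ((j:ℝ) * (x.2 - ζt) ^ (j-1) * 1)| * ‖sndL‖
          ≤ |a x.1 * e * ((j:ℝ) * (x.2 - ζt) ^ (j-1) * 1)| * 1 :=
            mul_le_mul_of_nonneg_left (ContinuousLinearMap.norm_snd_le ℝ E ℝ) (abs_nonneg _)
        _ = |a x.1| * |e| * ((j:ℝ) * |(x.2 - ζt) ^ (j-1)|) := by
            rw [mul_one, abs_mul, abs_mul, mul_one, abs_mul, Nat.abs_cast]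
        _ ≤ N * |e| * ((j:ℝ) * r ^ (j-1)) := by
            refine mul_le_mul (mul_le_mul (ha0 _ hx1) le_rfl (abs_nonneg _) hN)
              (mul_le_mul_of_nonneg_left (hpowr _ hx2 _) (Nat.cast_nonneg j)) (by positivity)
              (by positivity)
    have h2 : ‖((x.2 - ζt) ^ j * e) • ((D x.1).comp fstL)‖ ≤ r ^ j * |e| * N := by
      refine le_trans (ContinuousLinearMap.opNorm_smul_le _ _) ?_
      rw [Real.norm_eq_abs, abs_mul]
      have hc : ‖(D x.1).comp fstL‖ ≤ N := by
        refine le_trans (ContinuousLinearMap.opNorm_comp_le _ _) ?_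
        calc ‖D x.1‖ * ‖fstL‖ ≤ N * 1 :=
            mul_le_mul (ha1 _ hx1) (ContinuousLinearMap.norm_fst_le ℝ E ℝ) (norm_nonneg _) hN
          _ = N := mul_one N
      exact mul_le_mul (mul_le_mul (hpowr _ hx2 j) le_rfl (abs_nonneg _) (by positivity)) hc
        (norm_nonneg _) (by positivity)
    refine le_trans (norm_add_le _ _) ?_
    have hcomb : N * |e| * ((j:ℝ) * r ^ (j-1)) + r ^ j * |e| * N
        = N * |e| * (r ^ j + (j:ℝ) * r ^ (j-1)) := by ring
    have hNe : (0:ℝ) ≤ N * |e| := by positivity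
    have t1 : (0:ℝ) ≤ (j:ℝ)*r^(j-1) := by positivity
    have t2 : (0:ℝ) ≤ 2*j*j*r^(j-2) := by positivity
    calc ‖(a x.1 * e * ((j:ℝ) * (x.2 - ζt) ^ (j-1) * 1)) • sndL‖
          + ‖((x.2 - ζt) ^ j * e) • ((D x.1).comp fstL)‖
        ≤ N * |e| * ((j:ℝ) * r ^ (j-1)) + r ^ j * |e| * N := add_le_add h1 h2
      _ = N * |e| * (r ^ j + (j:ℝ) * r ^ (j-1)) := hcomb
      _ ≤ u := by
          rw [hu]
          refine mul_le_mul_of_nonneg_left ?_ hNe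
          linarith
  · -- Hölder bound
    intro x hx y hy
    beta_reduce
    obtain ⟨hx1, hx2⟩ := hmem x hx
    obtain ⟨hy1, hy2⟩ := hmem y hy
    set d : ℝ := dist x y with hd
    have hdα : (0:ℝ) ≤ d ^ α := Real.rpow_nonneg dist_nonneg _
    have hd2 : d ≤ 2 := by
      rw [hd, Prod.dist_eq]
      have e1 : dist x.1 y.1 ≤ 2 := by
        calc dist x.1 y.1 ≤ dist x.1 0 + dist 0 y.1 := dist_triangle _ _ _
          _ ≤ 1 + 1 := add_le_add (mem_closedBall.1 hx1) (by rw [dist_comm]; exact mem_closedBall.1 hy1)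
          _ = 2 := by norm_num
      have e2 : dist x.2 y.2 ≤ 2 := by
        rw [Real.dist_eq]
        calc |x.2 - y.2| = |(x.2 - ζt) - (y.2 - ζt)| := by ring_nf
          _ ≤ |x.2 - ζt| + |y.2 - ζt| := abs_sub _ _
          _ ≤ r + r := add_le_add hx2 hy2
          _ ≤ 2 := by linarith
      exact max_le e1 e2
    have hdd : d ≤ 2 * d ^ α := helper_two_rpow' hα0 hα1 dist_nonneg hd2
    have hd1 : dist x.1 y.1 ≤ d := by rw [hd, Prod.dist_eq]; exact le_max_left _ _
    have hd2' : |x.2 - y.2| ≤ d := by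
      rw [← Real.dist_eq, hd, Prod.dist_eq]; exact le_max_right _ _
    have hfa : |a x.1 - a y.1| ≤ N * (2 * d ^ α) := by
      calc |a x.1 - a y.1| ≤ N * ‖x.1 - y.1‖ := halip _ hx1 _ hy1
        _ = N * dist x.1 y.1 := by rw [dist_eq_norm]
        _ ≤ N * (2 * d ^ α) := by
            refine mul_le_mul_of_nonneg_left (le_trans hd1 hdd) hN
    have hfD : ‖D x.1 - D y.1‖ ≤ N * d ^ α := by
      refine le_trans (haH _ hx1 _ hy1) (mul_le_mul_of_nonneg_left ?_ hN)
      exact Real.rpow_le_rpow dist_nonneg hd1 hα0.le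
    have hb2 : |x.2 - y.2| ≤ 2 * d ^ α := le_trans hd2' hdd
    -- pow differences
    have hpj : |(x.2 - ζt)^j - (y.2 - ζt)^j| ≤ j * r^(j-1) * (2 * d ^ α) := by
      have h := helper_pow_sub_pow' hx2 hy2 j
      have heq : |(x.2 - ζt) - (y.2 - ζt)| = |x.2 - y.2| := by ring_nf
      rw [heq] at h
      refine le_trans h (mul_le_mul_of_nonneg_left hb2 (by positivity))
    have hpj1 : |(x.2 - ζt)^(j-1) - (y.2 - ζt)^(j-1)| ≤ j * r^(j-2) * (2 * d ^ α) := by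
      have h := helper_pow_sub_pow' hx2 hy2 (j-1)
      have heq : |(x.2 - ζt) - (y.2 - ζt)| = |x.2 - y.2| := by ring_nf
      rw [heq] at h
      have hsub : (j:ℝ) - 1 ≤ j := by simp
      have hcast : ((j-1 : ℕ) : ℝ) ≤ (j:ℝ) := by
        exact_mod_cast Nat.cast_le.2 (Nat.sub_le j 1)
      have hexp : (j - 1) - 1 = j - 2 := by omega
      rw [hexp] at h
      calc |(x.2 - ζt)^(j-1) - (y.2 - ζt)^(j-1)|
          ≤ ((j-1:ℕ):ℝ) * r^(j-2) * |x.2 - y.2| := h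
        _ ≤ (j:ℝ) * r^(j-2) * (2 * d ^ α) := by
            refine mul_le_mul (mul_le_mul hcast le_rfl (by positivity) (Nat.cast_nonneg j))
              hb2 (abs_nonneg _) (by positivity)
    -- assemble
    have e3 : ‖(D x.1).comp fstL‖ ≤ N := by
      refine le_trans (ContinuousLinearMap.opNorm_comp_le _ _) ?_
      calc ‖D x.1‖ * ‖fstL‖ ≤ N * 1 :=
          mul_le_mul (ha1 _ hx1) (ContinuousLinearMap.norm_fst_le ℝ E ℝ) (norm_nonneg _) hN
        _ = N := mul_one N
    have e5 : ‖(D x.1).comp fstL - (D y.1).comp fstL‖ ≤ N * d ^ α := by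
      rw [← ContinuousLinearMap.sub_comp]
      refine le_trans (ContinuousLinearMap.opNorm_comp_le _ _) ?_
      calc ‖D x.1 - D y.1‖ * ‖fstL‖ ≤ (N * d ^ α) * 1 :=
          mul_le_mul hfD (ContinuousLinearMap.norm_fst_le ℝ E ℝ) (norm_nonneg _) (by positivity)
        _ = N * d ^ α := mul_one _
    have e1 : |a x.1 * e * ((j:ℝ) * (x.2 - ζt) ^ (j-1) * 1)
        - a y.1 * e * ((j:ℝ) * (y.2 - ζt) ^ (j-1) * 1)|
        ≤ |e| * ((j:ℝ) * (N * (2 * d ^ α) * r ^ (j-1) + N * ((j:ℝ) * r ^ (j-2) * (2 * d ^ α)))) := by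
      have hre : a x.1 * e * ((j:ℝ) * (x.2 - ζt) ^ (j-1) * 1)
          - a y.1 * e * ((j:ℝ) * (y.2 - ζt) ^ (j-1) * 1)
          = e * ((j:ℝ) * (a x.1 * (x.2 - ζt) ^ (j-1) - a y.1 * (y.2 - ζt) ^ (j-1))) := by ring
      rw [hre, abs_mul, abs_mul, Nat.abs_cast]
      refine mul_le_mul_of_nonneg_left (mul_le_mul_of_nonneg_left ?_ (Nat.cast_nonneg j))
        (abs_nonneg e)
      refine le_trans (abs_mul_sub _ _ _ _) ?_
      refine add_le_add (mul_le_mul hfa (hpowr _ hx2 _) (abs_nonneg _) (by positivity)) ?_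
      exact mul_le_mul (ha0 _ hy1) hpj1 (abs_nonneg _) hN
    have e2 : |(x.2 - ζt) ^ j * e - (y.2 - ζt) ^ j * e|
        ≤ |e| * ((j:ℝ) * r ^ (j-1) * (2 * d ^ α)) := by
      have hre : (x.2 - ζt) ^ j * e - (y.2 - ζt) ^ j * e
          = e * ((x.2 - ζt) ^ j - (y.2 - ζt) ^ j) := by ring
      rw [hre, abs_mul]
      exact mul_le_mul_of_nonneg_left hpj (abs_nonneg e)
    have e4 : |(y.2 - ζt) ^ j * e| ≤ r ^ j * |e| := by
      rw [abs_mul]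
      exact mul_le_mul_of_nonneg_right (hpowr _ hy2 j) (abs_nonneg e)
    have key := norm_comb_sub (a x.1 * e * ((j:ℝ) * (x.2 - ζt) ^ (j-1) * 1))
      (a y.1 * e * ((j:ℝ) * (y.2 - ζt) ^ (j-1) * 1))
      ((x.2 - ζt) ^ j * e) ((y.2 - ζt) ^ j * e)
      sndL ((D x.1).comp fstL) ((D y.1).comp fstL)
    refine le_trans key ?_
    have hsnd : ‖sndL‖ ≤ 1 := ContinuousLinearMap.norm_snd_le ℝ E ℝ
    calc |a x.1 * e * ((j:ℝ) * (x.2 - ζt) ^ (j-1) * 1)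
            - a y.1 * e * ((j:ℝ) * (y.2 - ζt) ^ (j-1) * 1)| * ‖sndL‖
          + (|(x.2 - ζt) ^ j * e - (y.2 - ζt) ^ j * e| * ‖(D x.1).comp fstL‖
            + |(y.2 - ζt) ^ j * e| * ‖(D x.1).comp fstL - (D y.1).comp fstL‖)
        ≤ (|e| * ((j:ℝ) * (N * (2 * d ^ α) * r ^ (j-1) + N * ((j:ℝ) * r ^ (j-2) * (2 * d ^ α))))) * 1
          + ((|e| * ((j:ℝ) * r ^ (j-1) * (2 * d ^ α))) * N
            + (r ^ j * |e|) * (N * d ^ α)) := by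
          refine add_le_add (mul_le_mul e1 hsnd (norm_nonneg _) (by positivity)) ?_
          refine add_le_add (mul_le_mul e2 e3 (norm_nonneg _) (by positivity)) ?_
          exact mul_le_mul e4 e5 (norm_nonneg _) (by positivity)
      _ = N * |e| * (r ^ j + 4 * j * r ^ (j-1) + 2 * j * j * r ^ (j-2)) * d ^ α := by ring
      _ = u * d ^ α := by rw [hu]

/-- `c1holderNormLE a s f c` : `f` is differentiable on `s` and its `C^{1,α}` norm on `s`
(sup norm of `f`, plus sup norm of its differential within `s`, plus the `a`-Hölder
seminorm of the differential) is at most `c`. -/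
def c1holderNormLE {X : Type*} [NormedAddCommGroup X] [NormedSpace ℝ X]
    (a : ℝ) (s : Set X) (f : X → ℝ) (c : ℝ) : Prop :=
  DifferentiableOn ℝ f s ∧
  ∃ m₀ m₁ h : ℝ, 0 ≤ m₀ ∧ 0 ≤ m₁ ∧ 0 ≤ h ∧
    (∀ x ∈ s, |f x| ≤ m₀) ∧
    (∀ x ∈ s, ‖fderivWithin ℝ f s x‖ ≤ m₁) ∧
    (∀ x ∈ s, ∀ y ∈ s, ‖fderivWithin ℝ f s x - fderivWithin ℝ f s y‖ ≤ h * dist x y ^ a) ∧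
    m₀ + m₁ + h ≤ c

set_option maxHeartbeats 1000000 in
lemma key_lemma {E : Type*} [NormedAddCommGroup E] [NormedSpace ℝ E]
    {α : ℝ} (hα : α ∈ Set.Ioo (0:ℝ) 1)
    (A : ℝ → E → ℝ → ℝ) (εt ζt M ρ : ℝ) (hM : 0 < M) (hρ : ρ ∈ Set.Ioo (0:ℝ) 1)
    (a : ℕ → ℕ → E → ℝ)
    (hcoef : ∀ j k : ℕ, c1holderNormLE α (closedBall (0:E) 1) (a j k) (M * (1/ρ)^(j+k)))
    (hsum : ∀ ε ζ : ℝ, |ε - εt| < ρ → |ζ - ζt| < ρ → ∀ z ∈ closedBall (0:E) 1,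
      HasSum (fun p : ℕ×ℕ => a p.1 p.2 z * (ε-εt)^p.2 * (ζ-ζt)^p.1) (A ε z ζ)) :
    ∃ C > (0:ℝ), ∀ ε : ℝ, |ε - εt| ≤ ρ/2 → ∃ L : E×ℝ → (E×ℝ →L[ℝ] ℝ),
      (∀ x ∈ (closedBall (0:E) 1) ×ˢ Icc (ζt - ρ/2) (ζt + ρ/2),
        HasFDerivWithinAt (fun y : E×ℝ => A ε y.1 y.2) (L x)
          ((closedBall (0:E) 1) ×ˢ Icc (ζt - ρ/2) (ζt + ρ/2)) x) ∧
      (∀ x ∈ (closedBall (0:E) 1) ×ˢ Icc (ζt - ρ/2) (ζt + ρ/2), |A ε x.1 x.2| ≤ C) ∧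
      (∀ x ∈ (closedBall (0:E) 1) ×ˢ Icc (ζt - ρ/2) (ζt + ρ/2), ‖L x‖ ≤ C) ∧
      (∀ x ∈ (closedBall (0:E) 1) ×ˢ Icc (ζt - ρ/2) (ζt + ρ/2),
       ∀ y ∈ (closedBall (0:E) 1) ×ˢ Icc (ζt - ρ/2) (ζt + ρ/2),
        ‖L x - L y‖ ≤ C * dist x y ^ α) := by
  obtain ⟨hα0, hα1⟩ := hα
  obtain ⟨hρ0, hρ1⟩ := hρ
  set r : ℝ := ρ/2 with hrdef
  have hr0 : 0 < r := by rw [hrdef]; linarith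
  have hr1 : r ≤ 1/2 := by rw [hrdef]; linarith
  have hrle1 : r ≤ 1 := by linarith
  -- unpack coefficient bounds
  choose hdiff m₀ m₁ mh hm0 hm1 hmh hb0 hb1 hbH hble using hcoef
  set N : ℕ → ℕ → ℝ := fun j k => M * (1/ρ)^(j+k) with hNdef
  have hN0 : ∀ j k, 0 ≤ N j k := by
    intro j k
    have : (0:ℝ) ≤ 1/ρ := by positivity
    exact mul_nonneg hM.le (pow_nonneg this _)
  have hA0 : ∀ j k, ∀ z ∈ closedBall (0:E) 1, |a j k z| ≤ N j k := by
    intro j k z hz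
    have := hble j k; have := hm1 j k; have := hmh j k
    exact (hb0 j k z hz).trans (by rw [hNdef]; dsimp only; linarith)
  have hA1 : ∀ j k, ∀ z ∈ closedBall (0:E) 1,
      ‖fderivWithin ℝ (a j k) (closedBall (0:E) 1) z‖ ≤ N j k := by
    intro j k z hz
    have := hble j k; have := hm0 j k; have := hmh j k
    exact (hb1 j k z hz).trans (by rw [hNdef]; dsimp only; linarith)
  have hAH : ∀ j k, ∀ z ∈ closedBall (0:E) 1, ∀ w ∈ closedBall (0:E) 1,
      ‖fderivWithin ℝ (a j k) (closedBall (0:E) 1) z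
        - fderivWithin ℝ (a j k) (closedBall (0:E) 1) w‖ ≤ N j k * dist z w ^ α := by
    intro j k z hz w hw
    refine (hbH j k z hz w hw).trans ?_
    have := hble j k; have := hm0 j k; have := hm1 j k
    have hd : (0:ℝ) ≤ dist z w ^ α := Real.rpow_nonneg dist_nonneg _
    refine mul_le_mul_of_nonneg_right (by rw [hNdef]; dsimp only; linarith) hd
  -- the summable bound
  set X : ℕ → ℝ := fun j => r^j + 4*j*r^(j-1) + 2*j*j*r^(j-2) with hXdef
  have hX0 : ∀ j, 0 ≤ X j := by
    intro j; rw [hXdef]; dsimp only; positivity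
  set f : ℕ → ℝ := fun j => M * (1/ρ)^j * X j with hfdef
  set g : ℕ → ℝ := fun k => (1/2:ℝ)^k with hgdef
  set u : ℕ × ℕ → ℝ := fun p => f p.1 * g p.2 with hudef
  have hf0 : ∀ j, 0 ≤ f j := by
    intro j; rw [hfdef]; dsimp only
    have : (0:ℝ) ≤ 1/ρ := by positivity
    exact mul_nonneg (mul_nonneg hM.le (pow_nonneg this _)) (hX0 j)
  have hg0 : ∀ k, 0 ≤ g k := fun k => by rw [hgdef]; positivity
  have hu0 : ∀ p, 0 ≤ u p := fun p => mul_nonneg (hf0 _) (hg0 _)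
  have hhalf : (1/ρ) * r = 1/2 := by rw [hrdef]; field_simp
  have hgeom : ∀ j : ℕ, (1/ρ:ℝ)^j * r^j = (1/2:ℝ)^j := by
    intro j; rw [← mul_pow, hhalf]
  -- summability of f
  have hjr1 : ∀ j : ℕ, (j:ℝ) * r^(j-1) * r = (j:ℝ) * r^j := by
    intro j
    cases j with
    | zero => simp
    | succ m => simp [pow_succ]; try ring
  have hjr2 : ∀ j : ℕ, (j:ℝ) * (j:ℝ) * r^(j-2) * (r*r) ≤ (j:ℝ) * (j:ℝ) * r^j := by
    intro j
    match j with
    | 0 => simp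
    | 1 => simp; nlinarith
    | (m+2) =>
      have : r^(m+2-2) * (r*r) = r^(m+2) := by
        rw [show m+2-2 = m from rfl]; ring
      rw [mul_assoc, this]
  have hF : Summable (fun j : ℕ => M * (1/2:ℝ)^j + (4*M/r) * ((j:ℝ)*(1/2:ℝ)^j)
      + (2*M/(r*r)) * ((j:ℝ)*(j:ℝ)*(1/2:ℝ)^j)) := by
    have h1 : Summable (fun j : ℕ => M * (1/2:ℝ)^j) :=
      (summable_geometric_of_lt_one (by norm_num) (by norm_num)).mul_left M
    have h2 : Summable (fun j : ℕ => (j:ℝ)*(1/2:ℝ)^j) := by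
      have := summable_pow_mul_geometric_of_norm_lt_one (R := ℝ) 1 (r := 1/2)
        (by rw [Real.norm_eq_abs, abs_of_nonneg (by norm_num : (0:ℝ) ≤ 1/2)]; norm_num)
      simpa [pow_one] using this
    have h3 : Summable (fun j : ℕ => (j:ℝ)*(j:ℝ)*(1/2:ℝ)^j) := by
      have := summable_pow_mul_geometric_of_norm_lt_one (R := ℝ) 2 (r := 1/2)
        (by rw [Real.norm_eq_abs, abs_of_nonneg (by norm_num : (0:ℝ) ≤ 1/2)]; norm_num)
      refine this.congr (fun j => by ring)
    exact (h1.add (h2.mul_left _)).add (h3.mul_left _)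
  have hfF : ∀ j : ℕ, f j ≤ M * (1/2:ℝ)^j + (4*M/r) * ((j:ℝ)*(1/2:ℝ)^j)
      + (2*M/(r*r)) * ((j:ℝ)*(j:ℝ)*(1/2:ℝ)^j) := by
    intro j
    rw [hfdef, hXdef]; dsimp only
    have hinv : (0:ℝ) < 1/ρ := by positivity
    have e0 : M * (1/ρ)^j * r^j = M * (1/2:ℝ)^j := by rw [mul_assoc, hgeom]
    have e1 : M * (1/ρ)^j * (4*(j:ℝ)*r^(j-1)) ≤ (4*M/r) * ((j:ℝ)*(1/2:ℝ)^j) := by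
      rw [div_mul_eq_mul_div, le_div_iff₀ hr0]
      have : M * (1/ρ)^j * (4*(j:ℝ)*r^(j-1)) * r = 4*M*((1/ρ)^j * ((j:ℝ)*r^(j-1)*r)) := by ring
      rw [this, hjr1 j]
      have : 4*M*((1/ρ)^j * ((j:ℝ)*r^j)) = 4*M*(j:ℝ)*((1/ρ)^j * r^j) := by ring
      rw [this, hgeom]
      apply le_of_eq; ring
    have e2 : M * (1/ρ)^j * (2*(j:ℝ)*(j:ℝ)*r^(j-2)) ≤ (2*M/(r*r)) * ((j:ℝ)*(j:ℝ)*(1/2:ℝ)^j) := by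
      rw [div_mul_eq_mul_div, le_div_iff₀ (by positivity)]
      have h := hjr2 j
      calc M * (1/ρ)^j * (2*(j:ℝ)*(j:ℝ)*r^(j-2)) * (r*r)
          = 2*M*((1/ρ)^j * ((j:ℝ)*(j:ℝ)*r^(j-2)*(r*r))) := by ring
        _ ≤ 2*M*((1/ρ)^j * ((j:ℝ)*(j:ℝ)*r^j)) := by
            refine mul_le_mul_of_nonneg_left (mul_le_mul_of_nonneg_left h
              (pow_nonneg hinv.le _)) (by positivity)
        _ = 2*M*((j:ℝ)*(j:ℝ))*((1/ρ)^j * r^j) := by ring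
        _ = 2*M*((j:ℝ)*(j:ℝ))*(1/2:ℝ)^j := by rw [hgeom]
        _ = 2*M*((j:ℝ)*(j:ℝ)*(1/2:ℝ)^j) := by ring
    calc f j = M * (1/ρ)^j * r^j + M * (1/ρ)^j * (4*(j:ℝ)*r^(j-1))
          + M * (1/ρ)^j * (2*(j:ℝ)*(j:ℝ)*r^(j-2)) := by rw [hfdef, hXdef]; dsimp only; ring
      _ ≤ _ := by rw [e0] at *; exact add_le_add (add_le_add le_rfl e1) e2
  have hfsum : Summable f :=
    Summable.of_norm_bounded hF (fun j => by
      rw [Real.norm_eq_abs, abs_of_nonneg (hf0 j)]; exact hfF j)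
  have hgsum : Summable g := by
    rw [hgdef]; exact summable_geometric_of_lt_one (by norm_num) (by norm_num)
  have husum : Summable u := hfsum.mul_of_nonneg hgsum hf0 hg0
  -- the constant
  have htsum0 : 0 ≤ ∑' p, u p := tsum_nonneg hu0
  refine ⟨(∑' p, u p) + 1, by linarith, ?_⟩
  intro ε hε
  -- apply the term lemma to each index
  have hterm : ∀ p : ℕ × ℕ, ∃ Φ : E × ℝ → (E × ℝ →L[ℝ] ℝ),
      (∀ x ∈ (closedBall (0:E) 1) ×ˢ Icc (ζt - r) (ζt + r),
        HasFDerivWithinAt (fun y : E × ℝ => a p.1 p.2 y.1 * (ε-εt)^p.2 * (y.2 - ζt) ^ p.1) (Φ x)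
          ((closedBall (0:E) 1) ×ˢ Icc (ζt - r) (ζt + r)) x) ∧
      (∀ x ∈ (closedBall (0:E) 1) ×ˢ Icc (ζt - r) (ζt + r),
        |a p.1 p.2 x.1 * (ε-εt)^p.2 * (x.2 - ζt) ^ p.1|
          ≤ N p.1 p.2 * |(ε-εt)^p.2| * X p.1) ∧
      (∀ x ∈ (closedBall (0:E) 1) ×ˢ Icc (ζt - r) (ζt + r),
        ‖Φ x‖ ≤ N p.1 p.2 * |(ε-εt)^p.2| * X p.1) ∧
      (∀ x ∈ (closedBall (0:E) 1) ×ˢ Icc (ζt - r) (ζt + r),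
       ∀ y ∈ (closedBall (0:E) 1) ×ˢ Icc (ζt - r) (ζt + r),
        ‖Φ x - Φ y‖ ≤ N p.1 p.2 * |(ε-εt)^p.2| * X p.1 * dist x y ^ α) := by
    intro p
    have := term_lemma hα0 hα1.le hr0 hr1 ζt ((ε-εt)^p.2) p.1 (hN0 p.1 p.2)
      (hdiff p.1 p.2) (hA0 p.1 p.2) (hA1 p.1 p.2) (hAH p.1 p.2)
    rw [hXdef]; exact this
  choose Φ hΦd hΦ0 hΦ1 hΦH using hterm
  -- term bound ≤ u
  have hub : ∀ p : ℕ × ℕ, N p.1 p.2 * |(ε-εt)^p.2| * X p.1 ≤ u p := by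
    intro p
    rw [hudef, hNdef, hfdef, hgdef]; dsimp only
    have h1 : |(ε-εt)^p.2| ≤ r^p.2 := by
      rw [abs_pow]
      exact pow_le_pow_left₀ (abs_nonneg _) hε p.2
    have hinv : (0:ℝ) < 1/ρ := by positivity
    calc M * (1/ρ)^(p.1+p.2) * |(ε-εt)^p.2| * X p.1
        ≤ M * (1/ρ)^(p.1+p.2) * r^p.2 * X p.1 := by
          refine mul_le_mul_of_nonneg_right (mul_le_mul_of_nonneg_left h1
            (mul_nonneg hM.le (pow_nonneg (one_div_nonneg.2 hρ0.le) _))) (hX0 _)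
      _ = (M * (1/ρ)^p.1 * X p.1) * ((1/ρ)^p.2 * r^p.2) := by rw [pow_add]; ring
      _ = (M * (1/ρ)^p.1 * X p.1) * (1/2:ℝ)^p.2 := by rw [hgeom]
  -- center sums
  have hcenter : ∀ x ∈ (closedBall (0:E) 1) ×ˢ Icc (ζt - r) (ζt + r),
      HasSum (fun p : ℕ × ℕ => a p.1 p.2 x.1 * (ε-εt)^p.2 * (x.2 - ζt)^p.1)
        (A ε x.1 x.2) := by
    intro x hx
    have hx2 : |x.2 - ζt| ≤ r := abs_le.2 ⟨by linarith [hx.2.1], by linarith [hx.2.2]⟩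
    exact hsum ε x.2 (lt_of_le_of_lt hε (by linarith)) (lt_of_le_of_lt hx2 (by linarith))
      x.1 hx.1
  -- apply core
  have hconv : Convex ℝ ((closedBall (0:E) 1) ×ˢ Icc (ζt - r) (ζt + r)) :=
    (convex_closedBall _ _).prod (convex_Icc _ _)
  have hcore := core_lemma hα0 hconv
    (fun p (y : E × ℝ) => a p.1 p.2 y.1 * (ε-εt)^p.2 * (y.2 - ζt)^p.1)
    Φ u husum hu0 hΦd
    (fun p x hx => (hΦ1 p x hx).trans (hub p))
    (fun p x hx y hy => (hΦH p x hx y hy).trans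
      (mul_le_mul_of_nonneg_right (hub p) (Real.rpow_nonneg dist_nonneg _)))
    hcenter
  refine ⟨fun x => ∑' p, Φ p x, hcore, ?_, ?_, ?_⟩
  · intro x hx
    rw [← Real.norm_eq_abs, ← (hcenter x hx).tsum_eq]
    refine le_trans (tsum_of_norm_bounded husum.hasSum
      (fun p => (hΦ0 p x hx).trans (hub p))) (by linarith)
  · intro x hx
    refine le_trans (tsum_of_norm_bounded husum.hasSum
      (fun p => (hΦ1 p x hx).trans (hub p))) (by linarith)
  · intro x hx y hy
    have hsx : Summable (fun p => Φ p x) :=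
      Summable.of_norm_bounded husum (fun p => (hΦ1 p x hx).trans (hub p))
    have hsy : Summable (fun p => Φ p y) :=
      Summable.of_norm_bounded husum (fun p => (hΦ1 p y hy).trans (hub p))
    have heq : (∑' p, Φ p x) - (∑' p, Φ p y) = ∑' p, (Φ p x - Φ p y) :=
      (Summable.tsum_sub hsx hsy).symm
    rw [heq]
    have hd : (0:ℝ) ≤ dist x y ^ α := Real.rpow_nonneg dist_nonneg _
    refine le_trans (tsum_of_norm_bounded (husum.hasSum.mul_right (dist x y ^ α))
      (fun p => (hΦH p x hx y hy).trans
        (mul_le_mul_of_nonneg_right (hub p) hd))) ?_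
    have h0 : 0 ≤ ∑' p, u p := tsum_nonneg hu0
    nlinarith

set_option maxHeartbeats 1000000 in
theorem stmt_9 (n : ℕ) (hn : 2 ≤ n) (ε₀ α : ℝ) (hε₀ : 0 < ε₀) (hα : α ∈ Set.Ioo (0 : ℝ) 1)
    (A : ℝ → EuclideanSpace ℝ (Fin (n - 1)) → ℝ → ℝ)
    -- real analyticity of `(ε,ζ) ↦ A(ε,·,ζ)` into `C^{1,α}(closure B_{n-1}(0,1))`:
    -- local power series expansions with geometric `C^{1,α}` bounds on the coefficients
    (hA : ∀ εt ∈ Set.Ioo (-ε₀) ε₀, ∀ ζt : ℝ, ∃ M > (0 : ℝ), ∃ ρ ∈ Set.Ioo (0 : ℝ) 1,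
      ∃ a : ℕ → ℕ → (EuclideanSpace ℝ (Fin (n - 1)) → ℝ),
        (∀ j k : ℕ, c1holderNormLE α
          (Metric.closedBall (0 : EuclideanSpace ℝ (Fin (n - 1))) 1)
          (a j k) (M * (1 / ρ) ^ (j + k))) ∧
        ∀ ε ζ : ℝ, |ε - εt| < ρ → |ζ - ζt| < ρ →
          ∀ z ∈ Metric.closedBall (0 : EuclideanSpace ℝ (Fin (n - 1))) 1,
            HasSum (fun p : ℕ × ℕ => a p.1 p.2 z * (ε - εt) ^ p.2 * (ζ - ζt) ^ p.1) (A ε z ζ))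
    (p q : ℝ) (hpq : p < q) (K : Set ℝ) (hK : IsCompact K) (hKsub : K ⊆ Set.Ioo (-ε₀) ε₀) :
    ∃ C > (0 : ℝ), ∀ ε ∈ K,
      c1holderNormLE α
        ((Metric.closedBall (0 : EuclideanSpace ℝ (Fin (n - 1))) 1) ×ˢ Set.Icc p q)
        (fun x => A ε x.1 x.2) C := by
  classical
  obtain ⟨hα0, hα1⟩ := hα
  rcases K.eq_empty_or_nonempty with hKe | hKne
  · exact ⟨1, one_pos, fun ε hε => absurd hε (by rw [hKe]; exact notMem_empty ε)⟩
  set B := Metric.closedBall (0 : EuclideanSpace ℝ (Fin (n - 1))) 1 with hBdef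
  set S := B ×ˢ Set.Icc p q with hSdef
  have hconv : Convex ℝ S := (convex_closedBall _ _).prod (convex_Icc _ _)
  have hint : (interior S).Nonempty := by
    rw [hSdef, interior_prod_eq]
    refine ⟨(0, (p+q)/2), ?_, ?_⟩
    · have : Metric.ball (0 : EuclideanSpace ℝ (Fin (n - 1))) 1 ⊆ interior B :=
        Metric.isOpen_ball.subset_interior_iff.2 Metric.ball_subset_closedBall
      exact this (Metric.mem_ball_self one_pos)
    · rw [interior_Icc]; constructor <;> [linarith; linarith]
  have hud : UniqueDiffOn ℝ S := uniqueDiffOn_convex hconv hint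
  -- local packages
  have hpkg : ∀ w : ℝ × ℝ, ∃ r C : ℝ, 0 < r ∧ 0 < C ∧
      (w ∈ K ×ˢ Set.Icc p q → ∀ ε : ℝ, |ε - w.1| ≤ r →
        ∃ L : (EuclideanSpace ℝ (Fin (n - 1)) × ℝ) → (EuclideanSpace ℝ (Fin (n - 1)) × ℝ →L[ℝ] ℝ),
          (∀ x ∈ B ×ˢ Icc (w.2 - r) (w.2 + r),
            HasFDerivWithinAt (fun y => A ε y.1 y.2) (L x) (B ×ˢ Icc (w.2 - r) (w.2 + r)) x) ∧
          (∀ x ∈ B ×ˢ Icc (w.2 - r) (w.2 + r), |A ε x.1 x.2| ≤ C) ∧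
          (∀ x ∈ B ×ˢ Icc (w.2 - r) (w.2 + r), ‖L x‖ ≤ C) ∧
          (∀ x ∈ B ×ˢ Icc (w.2 - r) (w.2 + r), ∀ y ∈ B ×ˢ Icc (w.2 - r) (w.2 + r),
            ‖L x - L y‖ ≤ C * dist x y ^ α)) := by
    intro w
    by_cases hw : w ∈ K ×ˢ Set.Icc p q
    · obtain ⟨M, hM, ρ, hρ, a, hcoef, hsum⟩ := hA w.1 (hKsub hw.1) w.2
      obtain ⟨C, hC, hgood⟩ := key_lemma ⟨hα0, hα1⟩ A w.1 w.2 M ρ hM hρ a hcoef hsum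
      exact ⟨ρ/2, C, by linarith [hρ.1], hC, fun _ ε hε => hgood ε hε⟩
    · exact ⟨1/4, 1, by norm_num, one_pos, fun h => absurd h hw⟩
  choose rr cc hrr0 hcc0 hgood using hpkg
  -- compact cover
  have hP : IsCompact (K ×ˢ Set.Icc p q) := hK.prod isCompact_Icc
  have hcover : (K ×ˢ Set.Icc p q) ⊆ ⋃ w ∈ (K ×ˢ Set.Icc p q), Metric.ball w (rr w / 2) := by
    intro w hw
    exact Set.mem_biUnion hw (Metric.mem_ball_self (by linarith [hrr0 w]))
  obtain ⟨T, hTsub, hTfin, hTcover⟩ := hP.elim_finite_subcover_image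
    (fun w _ => Metric.isOpen_ball) hcover
  have hPne : (K ×ˢ Set.Icc p q).Nonempty := hKne.prod (nonempty_Icc.2 hpq.le)
  have hTne : T.Nonempty := by
    obtain ⟨w0, hw0⟩ := hPne
    obtain ⟨w, hw, _⟩ := Set.mem_iUnion₂.1 (hTcover hw0)
    exact ⟨w, hw⟩
  set F := hTfin.toFinset with hFdef
  have hFne : F.Nonempty := by
    obtain ⟨w, hw⟩ := hTne; exact ⟨w, hTfin.mem_toFinset.2 hw⟩
  set δ : ℝ := F.inf' hFne (fun w => rr w / 2) with hδdef
  have hδ0 : 0 < δ := by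
    rw [hδdef, Finset.lt_inf'_iff]
    intro w _; linarith [hrr0 w]
  have hδle : ∀ w ∈ T, δ ≤ rr w / 2 := by
    intro w hw
    exact Finset.inf'_le _ (hTfin.mem_toFinset.2 hw)
  set C0 : ℝ := F.sup' hFne cc with hC0def
  have hC0 : 0 < C0 := by
    obtain ⟨w, hw⟩ := hFne
    exact lt_of_lt_of_le (hcc0 w) (Finset.le_sup' cc hw)
  have hccle : ∀ w ∈ T, cc w ≤ C0 := fun w hw => Finset.le_sup' cc (hTfin.mem_toFinset.2 hw)
  -- final constant
  have hδα : 0 < δ ^ α := Real.rpow_pos_of_pos hδ0 _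
  set hh : ℝ := C0 + 2*C0/δ^α with hhdef
  have hh0 : 0 < hh := by
    rw [hhdef]; positivity
  refine ⟨C0 + C0 + hh + 1, by positivity, ?_⟩
  intro ε hεK
  -- chart selection
  have chart : ∀ ζ ∈ Set.Icc p q, ∃ w ∈ T, |ε - w.1| ≤ rr w ∧ |ζ - w.2| < rr w / 2 := by
    intro ζ hζ
    have : (ε, ζ) ∈ K ×ˢ Set.Icc p q := ⟨hεK, hζ⟩
    obtain ⟨w, hwT, hwb⟩ := Set.mem_iUnion₂.1 (hTcover this)
    have hd : dist (ε, ζ) w < rr w / 2 := Metric.mem_ball.1 hwb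
    rw [Prod.dist_eq] at hd
    have h1 : dist ε w.1 < rr w / 2 := lt_of_le_of_lt (le_max_left _ _) hd
    have h2 : dist ζ w.2 < rr w / 2 := lt_of_le_of_lt (le_max_right _ _) hd
    rw [Real.dist_eq] at h1 h2
    exact ⟨w, hwT, by linarith [hrr0 w], h2⟩
  -- choose local derivative fields
  have hLg : ∀ w : ℝ × ℝ, w ∈ T → |ε - w.1| ≤ rr w →
      ∃ L : (EuclideanSpace ℝ (Fin (n - 1)) × ℝ) → (EuclideanSpace ℝ (Fin (n - 1)) × ℝ →L[ℝ] ℝ),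
        (∀ x ∈ B ×ˢ Icc (w.2 - rr w) (w.2 + rr w),
          HasFDerivWithinAt (fun y => A ε y.1 y.2) (L x) (B ×ˢ Icc (w.2 - rr w) (w.2 + rr w)) x) ∧
        (∀ x ∈ B ×ˢ Icc (w.2 - rr w) (w.2 + rr w), |A ε x.1 x.2| ≤ cc w) ∧
        (∀ x ∈ B ×ˢ Icc (w.2 - rr w) (w.2 + rr w), ‖L x‖ ≤ cc w) ∧
        (∀ x ∈ B ×ˢ Icc (w.2 - rr w) (w.2 + rr w), ∀ y ∈ B ×ˢ Icc (w.2 - rr w) (w.2 + rr w),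
          ‖L x - L y‖ ≤ cc w * dist x y ^ α) :=
    fun w hw hε' => hgood w (hTsub hw) ε hε'
  choose LL hLd hLb0 hLb1 hLH using hLg
  have hmemS' : ∀ w : ℝ × ℝ, ∀ y : EuclideanSpace ℝ (Fin (n - 1)) × ℝ, y ∈ S →
      |y.2 - w.2| ≤ rr w → y ∈ B ×ˢ Icc (w.2 - rr w) (w.2 + rr w) := by
    intro w y hy h2
    obtain ⟨h2a, h2b⟩ := abs_le.1 h2
    exact ⟨hy.1, ⟨by linarith, by linarith⟩⟩
  have htrans : ∀ (w : ℝ × ℝ) (hw : w ∈ T) (hε' : |ε - w.1| ≤ rr w), ∀ y ∈ S,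
      |y.2 - w.2| < rr w →
      HasFDerivWithinAt (fun x => A ε x.1 x.2) (LL w hw hε' y) S y := by
    intro w hw hε' y hy hy2
    have hyS' : y ∈ B ×ˢ Icc (w.2 - rr w) (w.2 + rr w) := hmemS' w y hy hy2.le
    refine (hLd w hw hε' y hyS').mono_of_mem_nhdsWithin ?_
    rw [mem_nhdsWithin]
    refine ⟨(fun z : EuclideanSpace ℝ (Fin (n - 1)) × ℝ => z.2) ⁻¹' Metric.ball w.2 (rr w),
      Metric.isOpen_ball.preimage continuous_snd, ?_, ?_⟩
    · simpa [Metric.mem_ball, Real.dist_eq] using hy2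
    · rintro z ⟨hz1, hz2⟩
      have hz1' : |z.2 - w.2| < rr w := by
        simpa [Metric.mem_ball, Real.dist_eq] using hz1
      exact hmemS' w z hz2 hz1'.le
  -- differentiability and identification of fderivWithin
  have hfder : ∀ (w : ℝ × ℝ) (hw : w ∈ T) (hε' : |ε - w.1| ≤ rr w), ∀ y ∈ S,
      |y.2 - w.2| < rr w →
      fderivWithin ℝ (fun x => A ε x.1 x.2) S y = LL w hw hε' y := by
    intro w hw hε' y hy hy2
    exact (htrans w hw hε' y hy hy2).fderivWithin (hud y hy)
  have hdiffOn : DifferentiableOn ℝ (fun x => A ε x.1 x.2) S := by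
    intro x hx
    obtain ⟨w, hwT, hε', hx2⟩ := chart x.2 hx.2
    exact (htrans w hwT hε' x hx (by linarith [hrr0 w])).differentiableWithinAt
  refine ⟨hdiffOn, C0, C0, hh, hC0.le, hC0.le, hh0.le, ?_, ?_, ?_, by linarith⟩
  · -- sup bound
    intro x hx
    obtain ⟨w, hwT, hε', hx2⟩ := chart x.2 hx.2
    have hxS' := hmemS' w x hx (by linarith [hrr0 w])
    exact (hLb0 w hwT hε' x hxS').trans (hccle w hwT)
  · -- derivative bound
    intro x hx
    obtain ⟨w, hwT, hε', hx2⟩ := chart x.2 hx.2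
    rw [hfder w hwT hε' x hx (by linarith [hrr0 w])]
    exact (hLb1 w hwT hε' x (hmemS' w x hx (by linarith [hrr0 w]))).trans (hccle w hwT)
  · -- Hölder bound
    intro x hx y hy
    have hdα : (0:ℝ) ≤ dist x y ^ α := Real.rpow_nonneg dist_nonneg _
    rcases lt_or_ge (dist x y) δ with hcase | hcase
    · -- close: same chart
      obtain ⟨w, hwT, hε', hx2⟩ := chart x.2 hx.2
      have hyx2 : |y.2 - x.2| ≤ dist x y := by
        rw [← Real.dist_eq, dist_comm y.2 x.2]
        rw [show dist x y = max (dist x.1 y.1) (dist x.2 y.2) from Prod.dist_eq]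
        exact le_max_right _ _
      have hy2 : |y.2 - w.2| < rr w := by
        have hδw := hδle w hwT
        calc |y.2 - w.2| = |(y.2 - x.2) + (x.2 - w.2)| := by ring_nf
          _ ≤ |y.2 - x.2| + |x.2 - w.2| := abs_add_le _ _
          _ < δ + rr w / 2 := by
              refine add_lt_add_of_le_of_lt (le_trans hyx2 hcase.le) hx2
          _ ≤ rr w := by linarith
      rw [hfder w hwT hε' x hx (by linarith [hrr0 w]), hfder w hwT hε' y hy hy2]
      refine (hLH w hwT hε' x (hmemS' w x hx (by linarith [hrr0 w]))
        y (hmemS' w y hy hy2.le)).trans ?_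
      refine mul_le_mul_of_nonneg_right ((hccle w hwT).trans ?_) hdα
      rw [hhdef]
      have : (0:ℝ) ≤ 2*C0/δ^α := by positivity
      linarith
    · -- far apart
      obtain ⟨w, hwT, hε', hx2⟩ := chart x.2 hx.2
      obtain ⟨w', hwT', hε'', hy2⟩ := chart y.2 hy.2
      have b1 : ‖fderivWithin ℝ (fun x => A ε x.1 x.2) S x‖ ≤ C0 := by
        rw [hfder w hwT hε' x hx (by linarith [hrr0 w])]
        exact (hLb1 w hwT hε' x (hmemS' w x hx (by linarith [hrr0 w]))).trans (hccle w hwT)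
      have b2 : ‖fderivWithin ℝ (fun x => A ε x.1 x.2) S y‖ ≤ C0 := by
        rw [hfder w' hwT' hε'' y hy (by linarith [hrr0 w'])]
        exact (hLb1 w' hwT' hε'' y (hmemS' w' y hy (by linarith [hrr0 w']))).trans
          (hccle w' hwT')
      have hδd : δ ^ α ≤ dist x y ^ α := Real.rpow_le_rpow hδ0.le hcase hα0.le
      calc ‖fderivWithin ℝ (fun x => A ε x.1 x.2) S x
            - fderivWithin ℝ (fun x => A ε x.1 x.2) S y‖
          ≤ ‖fderivWithin ℝ (fun x => A ε x.1 x.2) S x‖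
            + ‖fderivWithin ℝ (fun x => A ε x.1 x.2) S y‖ := norm_sub_le _ _
        _ ≤ 2*C0 := by linarith
        _ = (2*C0/δ^α) * δ^α := by field_simp
        _ ≤ (2*C0/δ^α) * dist x y ^ α := by
            refine mul_le_mul_of_nonneg_left hδd (by positivity)
        _ ≤ hh * dist x y ^ α := by
            refine mul_le_mul_of_nonneg_right ?_ hdα
            rw [hhdef]; linarith
end

section
/- Let Ω be a bounded open connected subset of ℝⁿ of class C^{1,α} and R > 0. There exists c₁ > 0 such that for all u ∈ C^{1,α}(∂Ω × ℝ) and all v ∈ C^{1,α}(∂Ω) with v(∂Ω) ⊆ [-R,R], the function t ↦ u(t, v(t)) belongs to C^{1,α}(∂Ω) and ‖u(·,v(·))‖_{C^{1,α}(∂Ω)} ≤ c₁ ‖u‖_{C^{1,α}(∂Ω×[-R,R])} (1 + ‖v‖_{C^{1,α}(∂Ω)})². -/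
/-- Sup norm of a function over a set. -/
noncomputable def sNorm {X : Type*} [PseudoMetricSpace X] {F : Type*} [NormedAddCommGroup F]
    (s : Set X) (g : X → F) : ℝ :=
  sSup ((fun x => ‖g x‖) '' s)

/-- Hölder seminorm of exponent `a` of a function over a set. -/
noncomputable def hSemi {X : Type*} [PseudoMetricSpace X] {F : Type*} [NormedAddCommGroup F]
    (a : ℝ) (s : Set X) (g : X → F) : ℝ :=
  sSup {c | ∃ x ∈ s, ∃ y ∈ s, x ≠ y ∧ c = ‖g x - g y‖ / dist x y ^ a}

/-- The `C^{1,α}` norm on a set `s`. -/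
noncomputable def c1Norm {X : Type*} [NormedAddCommGroup X] [NormedSpace ℝ X]
    (a : ℝ) (s : Set X) (f : X → ℝ) : ℝ :=
  sNorm s f + sNorm s (fderivWithin ℝ f s) + hSemi a s (fderivWithin ℝ f s)

/-- Membership in `C^{1,α}` on a set: differentiability together with an `α`-Hölder bound
on the differential within the set. -/
def memC1aOn {X : Type*} [NormedAddCommGroup X] [NormedSpace ℝ X]
    {F : Type*} [NormedAddCommGroup F] [NormedSpace ℝ F]
    (a : ℝ) (s : Set X) (g : X → F) : Prop :=
  DifferentiableOn ℝ g s ∧ ∃ C ≥ (0 : ℝ), ∀ x ∈ s, ∀ y ∈ s,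
    ‖fderivWithin ℝ g s x - fderivWithin ℝ g s y‖ ≤ C * dist x y ^ a

section helpers
variable {X : Type*} [PseudoMetricSpace X] {F : Type*} [NormedAddCommGroup F]
  {a : ℝ} {s : Set X} {g : X → F} {C : ℝ}

lemma sNorm_nonneg : 0 ≤ sNorm s g :=
  Real.sSup_nonneg (by rintro _ ⟨x, _, rfl⟩; exact norm_nonneg _)

lemma hSemi_nonneg : 0 ≤ hSemi a s g := by
  refine Real.sSup_nonneg ?_
  rintro _ ⟨x, _, y, _, hxy, rfl⟩
  have : (0:ℝ) ≤ dist x y ^ a := Real.rpow_nonneg dist_nonneg a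
  positivity

lemma sNorm_le (hC : 0 ≤ C) (h : ∀ x ∈ s, ‖g x‖ ≤ C) : sNorm s g ≤ C :=
  Real.sSup_le (by rintro _ ⟨x, hx, rfl⟩; exact h x hx) hC

lemma norm_le_sNorm (h : ∀ x ∈ s, ‖g x‖ ≤ C) (hx : x ∈ s) : ‖g x‖ ≤ sNorm s g :=
  le_csSup ⟨C, by rintro _ ⟨y, hy, rfl⟩; exact h y hy⟩ ⟨x, hx, rfl⟩

end helpers

section helpers2
variable {X : Type*} [MetricSpace X] {F : Type*} [NormedAddCommGroup F]
  {a : ℝ} {s : Set X} {g : X → F} {C : ℝ}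

lemma hSemi_le (hC : 0 ≤ C)
    (h : ∀ x ∈ s, ∀ y ∈ s, x ≠ y → ‖g x - g y‖ ≤ C * dist x y ^ a) :
    hSemi a s g ≤ C := by
  refine Real.sSup_le ?_ hC
  rintro _ ⟨x, hx, y, hy, hxy, rfl⟩
  have hd : (0:ℝ) < dist x y ^ a := Real.rpow_pos_of_pos (dist_pos.2 hxy) a
  rw [div_le_iff₀ hd]
  exact h x hx y hy hxy

lemma holder_le_hSemi (hC : 0 ≤ C)
    (h : ∀ x ∈ s, ∀ y ∈ s, ‖g x - g y‖ ≤ C * dist x y ^ a)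
    {x y : X} (hx : x ∈ s) (hy : y ∈ s) :
    ‖g x - g y‖ ≤ hSemi a s g * dist x y ^ a := by
  rcases eq_or_ne x y with rfl | hxy
  · have h1 : (0:ℝ) ≤ dist x x ^ a := Real.rpow_nonneg dist_nonneg a
    have := hSemi_nonneg (a := a) (s := s) (g := g)
    simp only [sub_self, norm_zero]
    positivity
  · have hd : (0:ℝ) < dist x y ^ a := Real.rpow_pos_of_pos (dist_pos.2 hxy) a
    have hbdd : BddAbove {c | ∃ x ∈ s, ∃ y ∈ s, x ≠ y ∧ c = ‖g x - g y‖ / dist x y ^ a} := by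
      refine ⟨C, ?_⟩
      rintro _ ⟨x', hx', y', hy', hxy', rfl⟩
      have hd' : (0:ℝ) < dist x' y' ^ a := Real.rpow_pos_of_pos (dist_pos.2 hxy') a
      rw [div_le_iff₀ hd']
      exact h x' hx' y' hy'
    have hmem : ‖g x - g y‖ / dist x y ^ a ∈
        {c | ∃ x ∈ s, ∃ y ∈ s, x ≠ y ∧ c = ‖g x - g y‖ / dist x y ^ a} :=
      ⟨x, hx, y, hy, hxy, rfl⟩
    have := le_csSup hbdd hmem
    calc ‖g x - g y‖ = ‖g x - g y‖ / dist x y ^ a * dist x y ^ a := by field_simp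
    _ ≤ hSemi a s g * dist x y ^ a := by exact mul_le_mul_of_nonneg_right this hd.le

end helpers2

section chart
variable {E : Type*} [NormedAddCommGroup E] [NormedSpace ℝ E] [FiniteDimensional ℝ E]

lemma chart_comp {a : ℝ} (ha : a ∈ Set.Ioo (0:ℝ) 1) {R : ℝ} (hR : 0 < R)
    (w : E × ℝ → ℝ) (φ : E → ℝ)
    (hw : memC1aOn a ((Metric.closedBall (0:E) 1) ×ˢ Set.Icc (-R) R) w)
    (hφ : memC1aOn a (Metric.closedBall (0:E) 1) φ)
    (hφR : ∀ x ∈ Metric.closedBall (0:E) 1, φ x ∈ Set.Icc (-R) R) :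
    memC1aOn a (Metric.closedBall (0:E) 1) (fun p => w (p, φ p)) ∧
    c1Norm a (Metric.closedBall (0:E) 1) (fun p => w (p, φ p)) ≤
      4 * c1Norm a ((Metric.closedBall (0:E) 1) ×ˢ Set.Icc (-R) R) w *
        (1 + c1Norm a (Metric.closedBall (0:E) 1) φ) ^ 2 := by
  set B : Set E := Metric.closedBall (0:E) 1 with hBdef
  set S : Set (E × ℝ) := B ×ˢ Set.Icc (-R) R with hSdef
  obtain ⟨hwd, Cw, hCw0, hCw⟩ := hw
  obtain ⟨hφd, Cφ, hCφ0, hCφ⟩ := hφ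
  have ha0 : 0 < a := ha.1
  have ha1 : a ≤ 1 := ha.2.le
  -- unique differentiability
  have hBu : UniqueDiffOn ℝ B :=
    uniqueDiffOn_convex (convex_closedBall _ _)
      ⟨0, Metric.ball_subset_interior_closedBall (Metric.mem_ball_self one_pos)⟩
  have hSu : UniqueDiffOn ℝ S := hBu.prod (uniqueDiffOn_Icc (by linarith))
  -- the graph map
  set ψ : E → E × ℝ := fun p => (p, φ p) with hψdef
  have hψmap : Set.MapsTo ψ B S := fun p hp => ⟨hp, hφR p hp⟩
  set Dw := fderivWithin ℝ w S with hDw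
  set Dφ := fderivWithin ℝ φ B with hDφ
  set A : E → (E →L[ℝ] E × ℝ) := fun p => (ContinuousLinearMap.id ℝ E).prod (Dφ p) with hA
  have hψd : ∀ p ∈ B, HasFDerivWithinAt ψ (A p) B p := fun p hp =>
    (hasFDerivWithinAt_id p B).prodMk (hφd p hp).hasFDerivWithinAt
  have hcomp : ∀ p ∈ B, HasFDerivWithinAt (fun p => w (p, φ p)) ((Dw (ψ p)).comp (A p)) B p := by
    intro p hp
    exact HasFDerivWithinAt.comp p (hwd _ (hψmap hp)).hasFDerivWithinAt (hψd p hp) hψmap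
  set comp : E → ℝ := fun p => w (p, φ p) with hcompdef
  have hDcomp : ∀ p ∈ B, fderivWithin ℝ comp B p = (Dw (ψ p)).comp (A p) := fun p hp =>
    (hcomp p hp).fderivWithin (hBu p hp)
  -- abbreviations for the norms
  set N1 := sNorm S w
  set N2 := sNorm S Dw
  set N3 := hSemi a S Dw
  set M1 := sNorm B φ
  set M2 := sNorm B Dφ
  set M3 := hSemi a B Dφ
  have hN1 : (0:ℝ) ≤ N1 := sNorm_nonneg
  have hN2 : (0:ℝ) ≤ N2 := sNorm_nonneg
  have hN3 : (0:ℝ) ≤ N3 := hSemi_nonneg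
  have hM1 : (0:ℝ) ≤ M1 := sNorm_nonneg
  have hM2 : (0:ℝ) ≤ M2 := sNorm_nonneg
  have hM3 : (0:ℝ) ≤ M3 := hSemi_nonneg
  -- boundedness facts
  have hScomp : IsCompact S := (isCompact_closedBall _ _).prod isCompact_Icc
  have hz0 : ((0:E), (0:ℝ)) ∈ S := ⟨Metric.mem_closedBall_self zero_le_one,
    ⟨show -R ≤ (0:ℝ) by linarith, show (0:ℝ) ≤ R by linarith⟩⟩
  have hSbd : ∃ D ≥ (0:ℝ), ∀ x ∈ S, ∀ y ∈ S, dist x y ≤ D := by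
    obtain ⟨D, hD⟩ := Metric.isBounded_iff.1 hScomp.isBounded
    exact ⟨max D 0, le_max_right _ _, fun x hx y hy => (hD hx hy).trans (le_max_left _ _)⟩
  obtain ⟨D, hD0, hD⟩ := hSbd
  -- pointwise bounds by the sup norms
  have hwb : ∀ x ∈ S, ‖w x‖ ≤ N1 := by
    obtain ⟨K, hK⟩ := hScomp.exists_bound_of_continuousOn hwd.continuousOn
    exact fun x hx => norm_le_sNorm hK hx
  have hDwK : ∀ x ∈ S, ‖Dw x‖ ≤ ‖Dw ((0:E),(0:ℝ))‖ + Cw * D ^ a := by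
    intro x hx
    have h1 : ‖Dw x - Dw ((0:E),(0:ℝ))‖ ≤ Cw * dist x ((0:E),(0:ℝ)) ^ a := hCw x hx _ hz0
    have h2 : dist x ((0:E),(0:ℝ)) ^ a ≤ D ^ a :=
      Real.rpow_le_rpow dist_nonneg (hD x hx _ hz0) ha0.le
    have h3 := mul_le_mul_of_nonneg_left h2 hCw0
    have h4 := norm_sub_norm_le (Dw x) (Dw ((0:E),(0:ℝ)))
    linarith
  have hDwb : ∀ x ∈ S, ‖Dw x‖ ≤ N2 := fun x hx => norm_le_sNorm hDwK hx
  have hBbd : ∀ x ∈ B, ∀ y ∈ B, dist x y ≤ D := by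
    intro x hx y hy
    have h' := hD (x, (0:ℝ))
      ⟨hx, show -R ≤ (0:ℝ) by linarith, show (0:ℝ) ≤ R by linarith⟩ (y, (0:ℝ))
      ⟨hy, show -R ≤ (0:ℝ) by linarith, show (0:ℝ) ≤ R by linarith⟩
    rw [Prod.dist_eq] at h'
    exact le_trans le_sup_left h'
  have hDφK : ∀ x ∈ B, ‖Dφ x‖ ≤ ‖Dφ 0‖ + Cφ * D ^ a := by
    intro x hx
    have h0 : (0:E) ∈ B := Metric.mem_closedBall_self zero_le_one
    have h1 : ‖Dφ x - Dφ 0‖ ≤ Cφ * dist x 0 ^ a := hCφ x hx _ h0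
    have h2 : dist x (0:E) ^ a ≤ D ^ a :=
      Real.rpow_le_rpow dist_nonneg (hBbd x hx _ h0) ha0.le
    have h3 := mul_le_mul_of_nonneg_left h2 hCφ0
    have h4 := norm_sub_norm_le (Dφ x) (Dφ 0)
    linarith
  have hDφb : ∀ x ∈ B, ‖Dφ x‖ ≤ M2 := fun x hx => norm_le_sNorm hDφK hx
  -- Hölder bounds by the seminorms
  have hDwh : ∀ x ∈ S, ∀ y ∈ S, ‖Dw x - Dw y‖ ≤ N3 * dist x y ^ a :=
    fun x hx y hy => holder_le_hSemi hCw0 hCw hx hy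
  have hDφh : ∀ x ∈ B, ∀ y ∈ B, ‖Dφ x - Dφ y‖ ≤ M3 * dist x y ^ a :=
    fun x hx y hy => holder_le_hSemi hCφ0 hCφ hx hy
  -- bound on ‖A p‖
  have hAb : ∀ p ∈ B, ‖A p‖ ≤ 1 + M2 := by
    intro p hp
    refine ContinuousLinearMap.opNorm_le_bound _ (by linarith) (fun u => ?_)
    have : ‖A p u‖ = max ‖u‖ ‖Dφ p u‖ := by
      simp [hA, Prod.norm_def, ContinuousLinearMap.prod_apply]
    rw [this]
    have hexp : (1 + M2) * ‖u‖ = ‖u‖ + M2 * ‖u‖ := by ring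
    have h0 : (0:ℝ) ≤ M2 * ‖u‖ := mul_nonneg hM2 (norm_nonneg u)
    have h1 : ‖u‖ ≤ (1 + M2) * ‖u‖ := by linarith
    have h2 : ‖Dφ p u‖ ≤ (1 + M2) * ‖u‖ := by
      have ha1 := (Dφ p).le_opNorm u
      have hb1 := mul_le_mul_of_nonneg_right (hDφb p hp) (norm_nonneg u)
      linarith [norm_nonneg u]
    exact max_le h1 h2
  -- bound on ‖A p - A q‖
  have hAd : ∀ p q, ‖A p - A q‖ ≤ ‖Dφ p - Dφ q‖ := by
    intro p q
    refine ContinuousLinearMap.opNorm_le_bound _ (norm_nonneg _) (fun u => ?_)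
    have : (A p - A q) u = ((0:E), (Dφ p - Dφ q) u) := by
      simp [hA, Prod.ext_iff, ContinuousLinearMap.prod_apply]
    rw [this]
    have : ‖((0:E), (Dφ p - Dφ q) u)‖ = max ‖(0:E)‖ ‖(Dφ p - Dφ q) u‖ := Prod.norm_def _
    rw [this]
    simp only [norm_zero]
    rw [max_eq_right (norm_nonneg _)]
    exact (Dφ p - Dφ q).le_opNorm u
  -- Lipschitz bound for φ
  have hφlip : ∀ p ∈ B, ∀ q ∈ B, ‖φ p - φ q‖ ≤ M2 * ‖p - q‖ := fun p hp q hq =>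
    (convex_closedBall _ _).norm_image_sub_le_of_norm_fderivWithin_le hφd hDφb
      hq hp
  -- distance bound for ψ
  have hψdist : ∀ p ∈ B, ∀ q ∈ B, dist (ψ p) (ψ q) ≤ (1 + M2) * dist p q := by
    intro p hp q hq
    rw [Prod.dist_eq]
    refine max_le ?_ ?_
    · have h0 : (0:ℝ) ≤ M2 * dist p q := mul_nonneg hM2 dist_nonneg
      have hexp : (1 + M2) * dist p q = dist p q + M2 * dist p q := by ring
      linarith
    · have h1 := hφlip p hp q hq
      rw [dist_eq_norm, dist_eq_norm]
      have h0 : (0:ℝ) ≤ ‖p - q‖ := norm_nonneg _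
      have hexp : (1 + M2) * ‖p - q‖ = ‖p - q‖ + M2 * ‖p - q‖ := by ring
      linarith
  have hψdista : ∀ p ∈ B, ∀ q ∈ B, dist (ψ p) (ψ q) ^ a ≤ (1 + M2) * dist p q ^ a := by
    intro p hp q hq
    calc dist (ψ p) (ψ q) ^ a ≤ ((1 + M2) * dist p q) ^ a :=
          Real.rpow_le_rpow dist_nonneg (hψdist p hp q hq) ha0.le
      _ = (1 + M2) ^ a * dist p q ^ a :=
          Real.mul_rpow (by linarith) dist_nonneg
      _ ≤ (1 + M2) * dist p q ^ a := by
          have h1 : (1 + M2) ^ a ≤ (1 + M2) ^ (1:ℝ) :=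
            Real.rpow_le_rpow_of_exponent_le (by linarith) ha1
          rw [Real.rpow_one] at h1
          exact mul_le_mul_of_nonneg_right h1 (Real.rpow_nonneg dist_nonneg a)
  -- Hölder estimate for the derivative of the composite
  have key : ∀ p ∈ B, ∀ q ∈ B,
      ‖fderivWithin ℝ comp B p - fderivWithin ℝ comp B q‖
        ≤ (N3 * (1 + M2) ^ 2 + N2 * M3) * dist p q ^ a := by
    intro p hp q hq
    rw [hDcomp p hp, hDcomp q hq]
    have hsplit : (Dw (ψ p)).comp (A p) - (Dw (ψ q)).comp (A q)
        = (Dw (ψ p) - Dw (ψ q)).comp (A p) + (Dw (ψ q)).comp (A p - A q) := by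
      ext u
      simp [ContinuousLinearMap.comp_apply, map_sub]
    rw [hsplit]
    have hdnn : (0:ℝ) ≤ dist p q ^ a := Real.rpow_nonneg dist_nonneg a
    have h1 : ‖(Dw (ψ p) - Dw (ψ q)).comp (A p)‖ ≤ (N3 * (1 + M2) * dist p q ^ a) * (1 + M2) := by
      refine (ContinuousLinearMap.opNorm_comp_le _ _).trans ?_
      have ha' : ‖A p‖ ≤ 1 + M2 := hAb p hp
      have hb' : ‖Dw (ψ p) - Dw (ψ q)‖ ≤ N3 * dist (ψ p) (ψ q) ^ a :=
        hDwh _ (hψmap hp) _ (hψmap hq)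
      have hc' : N3 * dist (ψ p) (ψ q) ^ a ≤ N3 * ((1 + M2) * dist p q ^ a) :=
        mul_le_mul_of_nonneg_left (hψdista p hp q hq) hN3
      calc ‖Dw (ψ p) - Dw (ψ q)‖ * ‖A p‖
          ≤ (N3 * ((1 + M2) * dist p q ^ a)) * (1 + M2) :=
            mul_le_mul (hb'.trans hc') ha' (norm_nonneg _)
              (mul_nonneg hN3 (mul_nonneg (by linarith) hdnn))
        _ = (N3 * (1 + M2) * dist p q ^ a) * (1 + M2) := by ring
    have h2 : ‖(Dw (ψ q)).comp (A p - A q)‖ ≤ N2 * (M3 * dist p q ^ a) := by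
      refine (ContinuousLinearMap.opNorm_comp_le _ _).trans ?_
      have ha' : ‖Dw (ψ q)‖ ≤ N2 := hDwb _ (hψmap hq)
      have hb' : ‖A p - A q‖ ≤ ‖Dφ p - Dφ q‖ := hAd p q
      have hc' : ‖Dφ p - Dφ q‖ ≤ M3 * dist p q ^ a := hDφh p hp q hq
      exact mul_le_mul ha' (hb'.trans hc') (norm_nonneg _) hN2
    calc ‖(Dw (ψ p) - Dw (ψ q)).comp (A p) + (Dw (ψ q)).comp (A p - A q)‖
        ≤ ‖(Dw (ψ p) - Dw (ψ q)).comp (A p)‖ + ‖(Dw (ψ q)).comp (A p - A q)‖ := norm_add_le _ _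
      _ ≤ (N3 * (1 + M2) * dist p q ^ a) * (1 + M2) + N2 * (M3 * dist p q ^ a) := by linarith
      _ = (N3 * (1 + M2) ^ 2 + N2 * M3) * dist p q ^ a := by ring
  have hKey0 : (0:ℝ) ≤ N3 * (1 + M2) ^ 2 + N2 * M3 := by positivity
  have hmem : memC1aOn a B comp :=
    ⟨fun p hp => (hcomp p hp).differentiableWithinAt, N3 * (1 + M2) ^ 2 + N2 * M3, hKey0, key⟩
  refine ⟨hmem, ?_⟩
  -- the three pieces of the C^{1,α} norm of the composite
  have e1 : sNorm B comp ≤ N1 :=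
    sNorm_le hN1 (fun p hp => hwb (ψ p) (hψmap hp))
  have e2 : sNorm B (fderivWithin ℝ comp B) ≤ N2 * (1 + M2) := by
    refine sNorm_le (by positivity) (fun p hp => ?_)
    rw [hDcomp p hp]
    refine (ContinuousLinearMap.opNorm_comp_le _ _).trans ?_
    exact mul_le_mul (hDwb _ (hψmap hp)) (hAb p hp) (norm_nonneg _) hN2
  have e3 : hSemi a B (fderivWithin ℝ comp B) ≤ N3 * (1 + M2) ^ 2 + N2 * M3 :=
    hSemi_le hKey0 (fun x hx y hy _ => key x hx y hy)
  have hNw : c1Norm a S w = N1 + N2 + N3 := rfl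
  have hMφ : c1Norm a B φ = M1 + M2 + M3 := rfl
  have hcompN : c1Norm a B comp
      = sNorm B comp + sNorm B (fderivWithin ℝ comp B) + hSemi a B (fderivWithin ℝ comp B) := rfl
  rw [hcompN, hNw, hMφ]
  set T : ℝ := 1 + (M1 + M2 + M3) with hT
  have hT1 : (1:ℝ) ≤ T := by rw [hT]; linarith
  have hTm : 1 + M2 ≤ T := by rw [hT]; linarith
  have hT0 : (0:ℝ) ≤ T := by linarith
  have hTT : T ≤ T ^ 2 := by
    calc T = 1 * T := (one_mul T).symm
      _ ≤ T * T := mul_le_mul_of_nonneg_right hT1 hT0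
      _ = T ^ 2 := (sq T).symm
  have hT2 : (1:ℝ) ≤ T ^ 2 := hT1.trans hTT
  have hTsq : (1 + M2) ^ 2 ≤ T ^ 2 := by
    have := pow_le_pow_left₀ (by linarith : (0:ℝ) ≤ 1 + M2) hTm 2
    exact this
  have hM3T : M3 ≤ T ^ 2 := by rw [hT] at hTT ⊢; linarith
  have b1 : sNorm B comp ≤ N1 * T ^ 2 := by
    have := mul_le_mul_of_nonneg_left hT2 hN1
    linarith
  have b2 : sNorm B (fderivWithin ℝ comp B) ≤ N2 * T ^ 2 := by
    have := mul_le_mul_of_nonneg_left (hTm.trans hTT) hN2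
    linarith
  have b3 : hSemi a B (fderivWithin ℝ comp B) ≤ N3 * T ^ 2 + N2 * T ^ 2 := by
    have h1 := mul_le_mul_of_nonneg_left hTsq hN3
    have h2 := mul_le_mul_of_nonneg_left hM3T hN2
    linarith
  have h5 : (0:ℝ) ≤ (3 * N1 + 2 * N2 + 3 * N3) * T ^ 2 := by positivity
  linarith
end chart

lemma c1Norm_nonneg {X : Type*} [NormedAddCommGroup X] [NormedSpace ℝ X]
    {a : ℝ} {s : Set X} {f : X → ℝ} : 0 ≤ c1Norm a s f := by
  have h1 : (0:ℝ) ≤ sNorm s f := sNorm_nonneg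
  have h2 : (0:ℝ) ≤ sNorm s (fderivWithin ℝ f s) := sNorm_nonneg
  have h3 : (0:ℝ) ≤ hSemi a s (fderivWithin ℝ f s) := hSemi_nonneg
  unfold c1Norm
  linarith

theorem stmt_18 (n : ℕ) (hn : 2 ≤ n) (α : ℝ) (hα : α ∈ Set.Ioo (0 : ℝ) 1) (R : ℝ) (hR : 0 < R)
    (Ω : Set (EuclideanSpace ℝ (Fin n)))
    (hΩo : IsOpen Ω) (hΩb : Bornology.IsBounded Ω) (hΩc : IsConnected Ω)
    -- a fixed finite atlas of `C^{1,α}` local parametrizations of the boundary `∂Ω`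
    (k : ℕ) (hk : 0 < k)
    (γ : Fin k → EuclideanSpace ℝ (Fin (n - 1)) → EuclideanSpace ℝ (Fin n))
    (hγmap : ∀ l, Set.MapsTo (γ l)
      (Metric.closedBall (0 : EuclideanSpace ℝ (Fin (n - 1))) 1) (frontier Ω))
    (hγcover : frontier Ω ⊆
      ⋃ l, γ l '' Metric.closedBall (0 : EuclideanSpace ℝ (Fin (n - 1))) 1)
    (hγreg : ∀ l, memC1aOn α
      (Metric.closedBall (0 : EuclideanSpace ℝ (Fin (n - 1))) 1) (γ l)) :
    ∃ c₁ > (0 : ℝ),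
      ∀ u : EuclideanSpace ℝ (Fin n) → ℝ → ℝ, ∀ v : EuclideanSpace ℝ (Fin n) → ℝ,
        (∀ l, memC1aOn α
          ((Metric.closedBall (0 : EuclideanSpace ℝ (Fin (n - 1))) 1) ×ˢ Set.Icc (-R) R)
          (fun p => u (γ l p.1) p.2)) →
        (∀ l, memC1aOn α (Metric.closedBall (0 : EuclideanSpace ℝ (Fin (n - 1))) 1)
          (v ∘ γ l)) →
        (∀ t ∈ frontier Ω, v t ∈ Set.Icc (-R) R) →
        (∀ l, memC1aOn α (Metric.closedBall (0 : EuclideanSpace ℝ (Fin (n - 1))) 1)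
          ((fun t => u t (v t)) ∘ γ l)) ∧
        (∑ l, c1Norm α (Metric.closedBall (0 : EuclideanSpace ℝ (Fin (n - 1))) 1)
            ((fun t => u t (v t)) ∘ γ l))
          ≤ c₁ *
            (∑ l, c1Norm α
              ((Metric.closedBall (0 : EuclideanSpace ℝ (Fin (n - 1))) 1) ×ˢ Set.Icc (-R) R)
              (fun p => u (γ l p.1) p.2)) *
            (1 + ∑ l, c1Norm α (Metric.closedBall (0 : EuclideanSpace ℝ (Fin (n - 1))) 1)
              (v ∘ γ l)) ^ 2 := by
  refine ⟨4, by norm_num, fun u v hu hv hvR => ?_⟩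
  set B : Set (EuclideanSpace ℝ (Fin (n - 1))) :=
    Metric.closedBall (0 : EuclideanSpace ℝ (Fin (n - 1))) 1 with hB
  have key : ∀ l, memC1aOn α B ((fun t => u t (v t)) ∘ γ l) ∧
      c1Norm α B ((fun t => u t (v t)) ∘ γ l) ≤
        4 * c1Norm α (B ×ˢ Set.Icc (-R) R) (fun p => u (γ l p.1) p.2) *
          (1 + c1Norm α B (v ∘ γ l)) ^ 2 := by
    intro l
    exact chart_comp hα hR (fun p => u (γ l p.1) p.2) (v ∘ γ l) (hu l) (hv l)
      (fun x hx => hvR _ (hγmap l hx))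
  refine ⟨fun l => (key l).1, ?_⟩
  set N : Fin k → ℝ := fun l => c1Norm α (B ×ˢ Set.Icc (-R) R) (fun p => u (γ l p.1) p.2) with hN
  set M : Fin k → ℝ := fun l => c1Norm α B (v ∘ γ l) with hM
  have hN0 : ∀ l, (0:ℝ) ≤ N l := fun l => c1Norm_nonneg
  have hM0 : ∀ l, (0:ℝ) ≤ M l := fun l => c1Norm_nonneg
  have hMsum : ∀ l : Fin k, M l ≤ ∑ j, M j := fun l =>
    Finset.single_le_sum (fun j _ => hM0 j) (Finset.mem_univ l)
  have hMsum0 : (0:ℝ) ≤ ∑ j, M j := Finset.sum_nonneg (fun j _ => hM0 j)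
  have step1 : ∀ l : Fin k, c1Norm α B ((fun t => u t (v t)) ∘ γ l)
      ≤ 4 * N l * (1 + ∑ j, M j) ^ 2 := by
    intro l
    refine ((key l).2).trans ?_
    have hsq : (1 + M l) ^ 2 ≤ (1 + ∑ j, M j) ^ 2 :=
      pow_le_pow_left₀ (by linarith [hM0 l]) (by linarith [hMsum l]) 2
    exact mul_le_mul_of_nonneg_left hsq (by linarith [hN0 l])
  calc (∑ l, c1Norm α B ((fun t => u t (v t)) ∘ γ l))
      ≤ ∑ l, 4 * N l * (1 + ∑ j, M j) ^ 2 :=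
        Finset.sum_le_sum (fun l _ => step1 l)
    _ = (∑ l, 4 * N l) * (1 + ∑ j, M j) ^ 2 := by rw [Finset.sum_mul]
    _ = 4 * (∑ l, N l) * (1 + ∑ j, M j) ^ 2 := by rw [Finset.mul_sum]
end
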